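/- arXiv:1908.06128 — 6 statements merged into one kernel-verified Lean document; each statement's English description precedes it below -/
import Mathlib

section
/- Let q, r ∈ [1,∞) and α ∈ (0,1) satisfy α·(1/q + 1 − 1/r) = 1/q. Then there exists C ∈ (0,∞) such that for every u ∈ W_0^{1,r}((0,1),ℝ) with weak derivative g (i.e. u(x) = ∫_0^x g(t) dt for all x ∈ [0,1], u(1) = 0, g ∈ L^r((0,1),ℝ)) one has sup_{x∈[0,1]} |u(x)| ≤ C·(‖u‖_{L^r((0,1))} + ‖g‖_{L^r((0,1))})^α · ‖u‖_{L^q((0,1))}^{1−α}. -/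
open MeasureTheory

set_option maxHeartbeats 1000000 in
/-- Gagliardo–Nirenberg-type sup-norm interpolation inequality on `(0,1)`:
if `α(1/q + 1 − 1/r) = 1/q` with `q, r ∈ [1,∞)`, `α ∈ (0,1)`, then there is `C > 0` such that
for every `u ∈ W₀^{1,r}((0,1),ℝ)` with weak derivative `g`,
`sup_{x∈[0,1]} |u(x)| ≤ C (‖u‖_{L^r} + ‖g‖_{L^r})^α ‖u‖_{L^q}^{1−α}`. -/
theorem stmt8 (q r α : ℝ) (hq : 1 ≤ q) (hr : 1 ≤ r) (hα : α ∈ Set.Ioo (0 : ℝ) 1)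
    (heq : α * (1 / q + 1 - 1 / r) = 1 / q) :
    ∃ C : ℝ, 0 < C ∧ ∀ u g : ℝ → ℝ,
      MemLp g (ENNReal.ofReal r) (volume.restrict (Set.Ioo (0 : ℝ) 1)) →
      (∀ x ∈ Set.Icc (0 : ℝ) 1, u x = ∫ t in (0 : ℝ)..x, g t) →
      u 1 = 0 →
      ∀ x ∈ Set.Icc (0 : ℝ) 1,
        |u x| ≤ C * ((∫ t in Set.Ioo (0 : ℝ) 1, |u t| ^ r) ^ (1 / r)
                      + (∫ t in Set.Ioo (0 : ℝ) 1, |g t| ^ r) ^ (1 / r)) ^ α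
                  * ((∫ t in Set.Ioo (0 : ℝ) 1, |u t| ^ q) ^ (1 / q)) ^ (1 - α) := by
  obtain ⟨hα0, hα1⟩ := hα
  have hq0 : 0 < q := lt_of_lt_of_le one_pos hq
  have hr0 : 0 < r := lt_of_lt_of_le one_pos hr
  have hq0' : 0 < 1 / q := by positivity
  set β : ℝ := 1 / q + 1 - 1 / r with hβ
  have hαβ : α * β = 1 / q := heq
  have hβpos : 0 < β := by
    have h2 : 0 < α * β := by rw [hαβ]; exact hq0'
    rcases mul_pos_iff.mp h2 with ⟨_, h⟩ | ⟨h, _⟩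
    · exact h
    · exact absurd hα0 (not_lt.mpr h.le)
  have hr1 : 1 / r < 1 := by
    have h3 : α * β < β := mul_lt_of_lt_one_left hβpos hα1
    rw [hαβ, hβ] at h3
    linarith
  have hrr : 1 < r := by rw [div_lt_one hr0] at hr1; exact hr1
  refine ⟨2, two_pos, ?_⟩
  intro u g hg hu _ x hx
  have hfin : IsFiniteMeasure (volume.restrict (Set.Ioo (0 : ℝ) 1)) := by
    constructor
    rw [Measure.restrict_apply_univ, Real.volume_Ioo]
    exact ENNReal.ofReal_lt_top
  set Iq := ∫ t in Set.Ioo (0 : ℝ) 1, |u t| ^ q with hIqdef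
  set Ir := ∫ t in Set.Ioo (0 : ℝ) 1, |u t| ^ r with hIrdef
  set Gr := ∫ t in Set.Ioo (0 : ℝ) 1, |g t| ^ r with hGrdef
  set A : ℝ := Iq ^ (1 / q) with hAdef
  set B : ℝ := Gr ^ (1 / r) with hBdef
  set A' : ℝ := Ir ^ (1 / r) with hA'def
  have Iq0 : 0 ≤ Iq :=
    setIntegral_nonneg measurableSet_Ioo fun t _ => Real.rpow_nonneg (abs_nonneg _) _
  have Ir0 : 0 ≤ Ir :=
    setIntegral_nonneg measurableSet_Ioo fun t _ => Real.rpow_nonneg (abs_nonneg _) _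
  have Gr0 : 0 ≤ Gr :=
    setIntegral_nonneg measurableSet_Ioo fun t _ => Real.rpow_nonneg (abs_nonneg _) _
  have A0 : 0 ≤ A := Real.rpow_nonneg Iq0 _
  have B0 : 0 ≤ B := Real.rpow_nonneg Gr0 _
  have A'0 : 0 ≤ A' := Real.rpow_nonneg Ir0 _
  have RHS0 : 0 ≤ 2 * (A' + B) ^ α * A ^ (1 - α) :=
    mul_nonneg (mul_nonneg (by norm_num) (Real.rpow_nonneg (add_nonneg A'0 B0) _))
      (Real.rpow_nonneg A0 _)
  -- basic integrability facts
  have hr_ne : (ENNReal.ofReal r) ≠ 0 := by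
    simp only [ne_eq, ENNReal.ofReal_eq_zero, not_le]; exact hr0
  have hgOn : IntegrableOn g (Set.Ioo (0 : ℝ) 1) :=
    hg.integrable (by rw [ENNReal.one_le_ofReal]; exact hr)
  have hgIcc : IntegrableOn g (Set.Icc (0 : ℝ) 1) :=
    hgOn.congr_set_ae Ioo_ae_eq_Icc.symm
  have hucont : ContinuousOn u (Set.Icc (0 : ℝ) 1) := by
    have h1 : ContinuousOn (fun y => ∫ t in (0 : ℝ)..y, g t) (Set.uIcc (0 : ℝ) 1) :=
      intervalIntegral.continuousOn_primitive_interval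
        (by rwa [Set.uIcc_of_le zero_le_one])
    rw [Set.uIcc_of_le zero_le_one] at h1
    exact h1.congr hu
  have huq_cont : ContinuousOn (fun t => |u t| ^ q) (Set.Icc (0 : ℝ) 1) :=
    (hucont.abs).rpow_const fun t _ => Or.inr hq0.le
  have huqInt : IntegrableOn (fun t => |u t| ^ q) (Set.Icc (0 : ℝ) 1) :=
    huq_cont.integrableOn_compact isCompact_Icc
  have hgrInt : IntegrableOn (fun t => |g t| ^ r) (Set.Ioo (0 : ℝ) 1) := by
    have h := hg.integrable_norm_rpow hr_ne ENNReal.ofReal_ne_top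
    simpa [IntegrableOn, ENNReal.toReal_ofReal hr0.le, Real.norm_eq_abs] using h
  -- Hölder estimate
  have holder : ∀ a b : ℝ, 0 ≤ a → a < b → b ≤ 1 →
      ∫ t in Set.Ioo a b, |g t| ≤ (b - a) ^ (1 - 1 / r) * B := by
    intro a b ha hab hb1
    have hsub : Set.Ioo a b ⊆ Set.Ioo (0 : ℝ) 1 := Set.Ioo_subset_Ioo ha hb1
    have hfin2 : IsFiniteMeasure (volume.restrict (Set.Ioo a b)) := by
      constructor
      rw [Measure.restrict_apply_univ, Real.volume_Ioo]
      exact ENNReal.ofReal_lt_top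
    set r' := Real.conjExponent r with hr'def
    have hconj : r.HolderConjugate r' := Real.HolderConjugate.conjExponent hrr
    have hmem : MemLp (fun t => |g t|) (ENNReal.ofReal r) (volume.restrict (Set.Ioo a b)) := by
      have h := (hg.abs).restrict (Set.Ioo a b)
      rwa [Measure.restrict_restrict measurableSet_Ioo, Set.inter_eq_left.mpr hsub] at h
    have hone : MemLp (fun _ : ℝ => (1 : ℝ)) (ENNReal.ofReal r')
        (volume.restrict (Set.Ioo a b)) := memLp_const 1
    have H := integral_mul_le_Lp_mul_Lq_of_nonneg hconj
      (Filter.Eventually.of_forall fun t => abs_nonneg (g t))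
      (Filter.Eventually.of_forall fun _ => zero_le_one) hmem hone
    simp only [mul_one, Real.one_rpow] at H
    have hvol : ∫ _t in Set.Ioo a b, (1 : ℝ) = b - a := by
      rw [setIntegral_const, Real.volume_real_Ioo, smul_eq_mul, mul_one,
        max_eq_left (by linarith)]
    rw [hvol] at H
    have hGle : (∫ t in Set.Ioo a b, |g t| ^ r) ^ (1 / r) ≤ B := by
      apply Real.rpow_le_rpow
        (setIntegral_nonneg measurableSet_Ioo fun t _ => Real.rpow_nonneg (abs_nonneg _) _)
      · exact setIntegral_mono_set hgrInt
          (Filter.Eventually.of_forall fun t => Real.rpow_nonneg (abs_nonneg _) _)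
          (hsub.eventuallyLE)
      · positivity
    have hexp : 1 / r' = 1 - 1 / r := by
      have h1 := hconj.inv_add_inv_eq_one
      rw [one_div, one_div]
      linarith
    calc ∫ t in Set.Ioo a b, |g t|
        ≤ (∫ t in Set.Ioo a b, |g t| ^ r) ^ (1 / r) * (b - a) ^ (1 / r') := H
      _ ≤ B * (b - a) ^ (1 / r') := by
          apply mul_le_mul_of_nonneg_right hGle (Real.rpow_nonneg (by linarith) _)
      _ = (b - a) ^ (1 - 1 / r) * B := by rw [hexp, mul_comm]
  -- key estimate for every δ ∈ (0,1]
  have key : ∀ δ : ℝ, 0 < δ → δ ≤ 1 →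
      |u x| ≤ δ ^ (-(1 / q)) * A + δ ^ (1 - 1 / r) * B := by
    intro δ hδ0 hδ1
    set a := min x (1 - δ) with hadef
    have ha0 : 0 ≤ a := le_min hx.1 (by linarith)
    have hax : a ≤ x := min_le_left _ _
    have hb1 : a + δ ≤ 1 := by
      have := min_le_right x (1 - δ); linarith
    have hxb : x ≤ a + δ := by
      rcases min_cases x (1 - δ) with ⟨h1, _⟩ | ⟨h1, h2⟩
      · rw [hadef, h1]; linarith
      · rw [hadef, h1]; linarith [hx.2]
    have hab : a < a + δ := by linarith
    have hIccsub : Set.Icc a (a + δ) ⊆ Set.Icc (0 : ℝ) 1 := Set.Icc_subset_Icc ha0 hb1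
    obtain ⟨y, hy, hymin'⟩ := isCompact_Icc.exists_isMinOn (Set.nonempty_Icc.mpr hab.le)
      ((hucont.mono hIccsub).abs)
    have hymin : ∀ z ∈ Set.Icc a (a + δ), |u y| ≤ |u z| := fun z hz => hymin' hz
    have hy01 : y ∈ Set.Icc (0 : ℝ) 1 := hIccsub hy
    -- step 1 : |u y| ≤ δ ^ (-(1/q)) * A
    have h1 : |u y| ^ q * δ ≤ Iq := by
      have hconst := setIntegral_ge_of_const_le (c := |u y| ^ q) (μ := volume)
        (s := Set.Ioo a (a + δ)) measurableSet_Ioo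
        (by rw [Real.volume_Ioo]; exact ENNReal.ofReal_ne_top)
        (fun t ht => Real.rpow_le_rpow (abs_nonneg _)
          (hymin t (Set.Ioo_subset_Icc_self ht)) hq0.le)
        (huqInt.mono_set (Set.Ioo_subset_Icc_self.trans hIccsub))
      rw [Real.volume_real_Ioo, add_sub_cancel_left, max_eq_left hδ0.le, smul_eq_mul, mul_comm] at hconst
      refine hconst.trans ?_
      exact setIntegral_mono_set (huqInt.mono_set Set.Ioo_subset_Icc_self)
        (Filter.Eventually.of_forall fun t => Real.rpow_nonneg (abs_nonneg _) _)
        ((Set.Ioo_subset_Ioo ha0 hb1).eventuallyLE)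
    have h2 : |u y| ≤ δ ^ (-(1 / q)) * A := by
      have hyq : |u y| ^ q ≤ Iq * δ⁻¹ := by
        rw [← le_div_iff₀ hδ0] at h1
        rwa [div_eq_mul_inv] at h1
      have h5 : (|u y| ^ q) ^ (1 / q) ≤ (Iq * δ⁻¹) ^ (1 / q) :=
        Real.rpow_le_rpow (Real.rpow_nonneg (abs_nonneg _) _) hyq hq0'.le
      rw [one_div, Real.rpow_rpow_inv (abs_nonneg _) hq0.ne'] at h5
      rw [hAdef]
      calc |u y| ≤ (Iq * δ⁻¹) ^ q⁻¹ := h5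
        _ = δ ^ (-(1 / q)) * Iq ^ (1 / q) := by
            rw [Real.mul_rpow Iq0 (inv_nonneg.mpr hδ0.le), Real.inv_rpow hδ0.le,
              ← Real.rpow_neg hδ0.le, mul_comm, one_div]
    -- step 2 : |u x| ≤ |u y| + ∫ |g| over (a, a+δ)
    have hgx : IntervalIntegrable g volume 0 x := by
      apply (hgIcc.mono_set ?_).intervalIntegrable
      rw [Set.uIcc_of_le hx.1]
      exact Set.Icc_subset_Icc le_rfl hx.2
    have hgy : IntervalIntegrable g volume 0 y := by
      apply (hgIcc.mono_set ?_).intervalIntegrable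
      rw [Set.uIcc_of_le hy01.1]
      exact Set.Icc_subset_Icc le_rfl hy01.2
    have hdiff : u x - u y = ∫ t in y..x, g t := by
      rw [hu x hx, hu y hy01]
      exact intervalIntegral.integral_interval_sub_left hgx hgy
    have habs : |u x| ≤ |u y| + ∫ t in Set.Ioo a (a + δ), |g t| := by
      have h5 : |u x| - |u y| ≤ |u x - u y| := abs_sub_abs_le_abs_sub _ _
      have h6 : |∫ t in y..x, g t| ≤ ∫ t in Set.uIoc y x, |g t| := by
        have := intervalIntegral.norm_integral_le_integral_norm_uIoc
          (f := g) (a := y) (b := x) (μ := volume)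
        simpa [Real.norm_eq_abs] using this
      have h7 : ∫ t in Set.uIoc y x, |g t| ≤ ∫ t in Set.Ioo a (a + δ), |g t| := by
        apply setIntegral_mono_set ((hgOn.mono_set (Set.Ioo_subset_Ioo ha0 hb1)).abs)
          (Filter.Eventually.of_forall fun t => abs_nonneg _)
        rw [MeasureTheory.ae_le_set]
        refine measure_mono_null (fun t ht => ?_) (measure_singleton (a + δ))
        · obtain ⟨ht1, ht2⟩ := ht
          rw [Set.uIoc] at ht1
          obtain ⟨hta, htb⟩ := ht1
          have hmin : a ≤ min y x := le_min hy.1 hax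
          have hmax : max y x ≤ a + δ := max_le hy.2 hxb
          simp only [Set.mem_Ioo, not_and, not_lt] at ht2
          have : a < t := lt_of_le_of_lt hmin hta
          have : a + δ ≤ t := ht2 this
          have : t = a + δ := le_antisymm (htb.trans hmax) this
          simp [this]
      rw [hdiff] at h5
      linarith
    have h4 := holder a (a + δ) ha0 hab hb1
    rw [add_sub_cancel_left] at h4
    linarith
  -- direct bound |u x| ≤ B
  have hMB : |u x| ≤ B := by
    have h6 : |u x| ≤ ∫ t in Set.uIoc 0 x, |g t| := by
      rw [hu x hx]
      have := intervalIntegral.norm_integral_le_integral_norm_uIoc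
        (f := g) (a := 0) (b := x) (μ := volume)
      simpa [Real.norm_eq_abs] using this
    have h7 : ∫ t in Set.uIoc 0 x, |g t| ≤ ∫ t in Set.Ioo (0:ℝ) 1, |g t| := by
      apply setIntegral_mono_set (hgOn.abs)
        (Filter.Eventually.of_forall fun t => abs_nonneg _)
      rw [MeasureTheory.ae_le_set]
      refine measure_mono_null (fun t ht => ?_) (measure_singleton (1:ℝ))
      · obtain ⟨ht1, ht2⟩ := ht
        rw [Set.uIoc] at ht1
        obtain ⟨hta, htb⟩ := ht1
        have h0t : 0 < t := lt_of_le_of_lt (le_min le_rfl hx.1) hta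
        simp only [Set.mem_Ioo, not_and, not_lt] at ht2
        have h1t : 1 ≤ t := ht2 h0t
        have : t ≤ 1 := htb.trans (max_le zero_le_one hx.2)
        have : t = 1 := le_antisymm this h1t
        simp [this]
    have h8 := holder 0 1 le_rfl one_pos le_rfl
    simp only [sub_zero, Real.one_rpow, one_mul] at h8
    linarith
  -- now combine
  rcases le_or_gt B A with hBA | hAB
  · -- case B ≤ A
    rcases eq_or_lt_of_le B0 with hB0 | hB
    · -- B = 0
      have : |u x| ≤ 0 := by rw [hB0]; exact hMB
      linarith
    · -- B > 0
      have hA : 0 < A := lt_of_lt_of_le hB hBA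
      have hsplit : B = B ^ α * B ^ (1 - α) := by
        have hh : α + (1 - α) = 1 := by ring
        rw [← Real.rpow_add hB, hh, Real.rpow_one]
      have h9 : B ^ α * B ^ (1 - α) ≤ (A' + B) ^ α * A ^ (1 - α) := by
        apply mul_le_mul
        · exact Real.rpow_le_rpow B0 (by linarith) hα0.le
        · exact Real.rpow_le_rpow B0 hBA (by linarith)
        · exact Real.rpow_nonneg B0 _
        · exact Real.rpow_nonneg (add_nonneg A'0 B0) _
      have h10 : (0:ℝ) ≤ (A' + B) ^ α * A ^ (1 - α) :=
        mul_nonneg (Real.rpow_nonneg (add_nonneg A'0 B0) _) (Real.rpow_nonneg A0 _)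
      calc |u x| ≤ B := hMB
        _ = B ^ α * B ^ (1 - α) := hsplit
        _ ≤ (A' + B) ^ α * A ^ (1 - α) := h9
        _ ≤ 2 * (A' + B) ^ α * A ^ (1 - α) := by nlinarith
  · -- case A < B
    have hB : 0 < B := lt_of_le_of_lt A0 hAB
    rcases eq_or_lt_of_le A0 with hA0 | hA
    · -- A = 0 : limit argument
      have hle0 : |u x| ≤ 0 := by
        have hle : ∀ δ ∈ Set.Ioc (0:ℝ) 1, |u x| ≤ δ ^ (1 - 1 / r) * B := by
          intro δ hδ
          have hk := key δ hδ.1 hδ.2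
          rw [← hA0, mul_zero, zero_add] at hk
          exact hk
        have htend : Filter.Tendsto (fun δ : ℝ => δ ^ (1 - 1 / r) * B)
            (nhdsWithin 0 (Set.Ioi 0)) (nhds 0) := by
          have hc : ContinuousAt (fun δ : ℝ => δ ^ (1 - 1 / r)) 0 :=
            Real.continuousAt_rpow_const 0 _ (Or.inr (by linarith))
          have h0 : (0:ℝ) ^ (1 - 1 / r) = 0 := Real.zero_rpow (by linarith)
          have h2 := (hc.tendsto.mono_left
            (nhdsWithin_le_nhds (s := Set.Ioi (0:ℝ)))).mul_const B
          rw [h0, zero_mul] at h2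
          exact h2
        exact ge_of_tendsto htend (by
          filter_upwards [Ioc_mem_nhdsGT one_pos] with δ hδ using hle δ hδ)
      linarith
    · -- 0 < A
      set δ : ℝ := (A / B) ^ β⁻¹ with hδdef
      have hABdiv0 : 0 < A / B := div_pos hA hB
      have hδ0 : 0 < δ := Real.rpow_pos_of_pos hABdiv0 _
      have hδ1 : δ ≤ 1 := Real.rpow_le_one hABdiv0.le
        ((div_le_one hB).mpr hAB.le) (inv_nonneg.mpr hβpos.le)
      have hk := key δ hδ0 hδ1
      have hAαpos : (0:ℝ) < A ^ α := Real.rpow_pos_of_pos hA _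
      have hBαpos : (0:ℝ) < B ^ (1 - α) := Real.rpow_pos_of_pos hB _
      have hA1 : A ^ (1 - α) * A ^ α = A := by
        have hh : 1 - α + α = 1 := by ring
        rw [← Real.rpow_add hA, hh, Real.rpow_one]
      have hB1 : B ^ α * B ^ (1 - α) = B := by
        have hh : α + (1 - α) = 1 := by ring
        rw [← Real.rpow_add hB, hh, Real.rpow_one]
      have hβne : β ≠ 0 := ne_of_gt hβpos
      have hkey : β⁻¹ * (1 / q) = α := by
        rw [← hαβ]
        field_simp
      have e1 : δ ^ (-(1 / q)) * A = B ^ α * A ^ (1 - α) := by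
        rw [hδdef, ← Real.rpow_mul hABdiv0.le]
        have hexp1 : β⁻¹ * -(1 / q) = -α := by rw [mul_neg, hkey]
        rw [hexp1, Real.rpow_neg hABdiv0.le, Real.div_rpow hA.le hB.le]
        rw [inv_div, div_mul_eq_mul_div, div_eq_iff (ne_of_gt hAαpos)]
        rw [mul_assoc, hA1]
      have e2 : δ ^ (1 - 1 / r) * B = B ^ α * A ^ (1 - α) := by
        rw [hδdef, ← Real.rpow_mul hABdiv0.le]
        have hexp2 : β⁻¹ * (1 - 1 / r) = 1 - α := by
          have h15 : 1 - 1 / r = β - 1 / q := by rw [hβ]; ring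
          rw [h15, mul_sub, hkey, inv_mul_cancel₀ hβne]
        rw [hexp2, Real.div_rpow hA.le hB.le]
        rw [div_mul_eq_mul_div, div_eq_iff (ne_of_gt hBαpos)]
        rw [mul_comm (B ^ α) (A ^ (1 - α)), mul_assoc, hB1]
      rw [e1, e2] at hk
      have h9 : B ^ α * A ^ (1 - α) ≤ (A' + B) ^ α * A ^ (1 - α) := by
        apply mul_le_mul_of_nonneg_right _ (Real.rpow_nonneg A0 _)
        exact Real.rpow_le_rpow B0 (by linarith) hα0.le
      calc |u x| ≤ B ^ α * A ^ (1 - α) + B ^ α * A ^ (1 - α) := hk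
        _ = 2 * (B ^ α * A ^ (1 - α)) := by ring
        _ ≤ 2 * ((A' + B) ^ α * A ^ (1 - α)) := by linarith
        _ = 2 * (A' + B) ^ α * A ^ (1 - α) := by ring
end

section
/- Let q ∈ [1,∞), p ∈ (q,∞), r ∈ (1,∞) and α ∈ (0,1) satisfy α·(1/q + 1 − 1/r) = 1/q − 1/p. Then there exists C ∈ (0,∞) such that for every u ∈ W_0^{1,r}((0,1),ℝ) with weak derivative g (i.e. u(x) = ∫_0^x g(t) dt for all x ∈ [0,1], u(1) = 0, g ∈ L^r((0,1),ℝ)) one has ‖u‖_{L^p((0,1))} ≤ C·(‖u‖_{L^r((0,1))} + ‖g‖_{L^r((0,1))})^α · ‖u‖_{L^q((0,1))}^{1−α}. -/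
open MeasureTheory

lemma aux_prob : IsProbabilityMeasure (volume.restrict (Set.Ioo (0:ℝ) 1)) :=
  ⟨by simp [Measure.restrict_apply_univ, Real.volume_Ioo]⟩

/-- Hölder bound for the L¹ norm on a subinterval. -/
lemma aux_holder {f : ℝ → ℝ} {r r' : ℝ} (hconj : r.HolderConjugate r')
    (hf : MemLp f (ENNReal.ofReal r) (volume.restrict (Set.Ioo (0:ℝ) 1)))
    {a b : ℝ} (hab : a ≤ b) (h0 : 0 ≤ a) (h1 : b ≤ 1) :
    ∫ t in Set.Ioo a b, |f t| ≤
      (∫ t in Set.Ioo (0:ℝ) 1, |f t| ^ r) ^ (1/r) * (b - a) ^ (1/r') := by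
  haveI := aux_prob
  have hsub : Set.Ioo a b ⊆ Set.Ioo (0:ℝ) 1 := fun t ht =>
    ⟨lt_of_le_of_lt h0 ht.1, lt_of_lt_of_le ht.2 h1⟩
  have hfr : MemLp f (ENNReal.ofReal r) (volume.restrict (Set.Ioo a b)) := by
    have h2 := hf.restrict (Set.Ioo a b)
    rwa [Measure.restrict_restrict measurableSet_Ioo, Set.inter_eq_left.mpr hsub] at h2
  have habs : MemLp (fun t => |f t|) (ENNReal.ofReal r) (volume.restrict (Set.Ioo a b)) := by
    simpa [Real.norm_eq_abs] using hfr.norm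
  have h := integral_mul_le_Lp_mul_Lq_of_nonneg hconj
    (μ := volume.restrict (Set.Ioo a b)) (f := fun t => |f t|) (g := fun _ => (1:ℝ))
    (Filter.Eventually.of_forall fun t => abs_nonneg _)
    (Filter.Eventually.of_forall fun t => zero_le_one) habs (memLp_const 1)
  simp only [mul_one, Real.one_rpow] at h
  have hvol : ∫ (_ : ℝ) in Set.Ioo a b, (1:ℝ) = b - a := by
    simp [Real.volume_Ioo, hab, ENNReal.toReal_ofReal (by linarith : (0:ℝ) ≤ b - a)]
  rw [hvol] at h
  refine h.trans ?_
  have hr0 : 0 < r := hconj.pos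
  refine mul_le_mul_of_nonneg_right ?_ (Real.rpow_nonneg (by linarith) _)
  refine Real.rpow_le_rpow (setIntegral_nonneg measurableSet_Ioo
    (fun t _ => Real.rpow_nonneg (abs_nonneg _) _)) ?_ (one_div_nonneg.mpr hr0.le)
  · -- ∫ |f|^r over Ioo a b ≤ over Ioo 0 1
    have hint : IntegrableOn (fun t => |f t| ^ r) (Set.Ioo (0:ℝ) 1) volume := by
      have := hf.integrable_norm_rpow (by simp [hconj.pos] : ENNReal.ofReal r ≠ 0) (by simp)
      exact (by simpa [Real.norm_eq_abs, ENNReal.toReal_ofReal hconj.nonneg] using this :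
        Integrable (fun x => |f x| ^ r) (volume.restrict (Set.Ioo (0:ℝ) 1)))
    refine setIntegral_mono_set hint
      (Filter.Eventually.of_forall fun t => Real.rpow_nonneg (abs_nonneg _) _)
      (HasSubset.Subset.eventuallyLE hsub)

set_option maxHeartbeats 1000000 in
/-- Gagliardo–Nirenberg-type `L^p` interpolation inequality on `(0,1)`:
if `α(1/q + 1 − 1/r) = 1/q − 1/p` with `q ∈ [1,∞)`, `p ∈ (q,∞)`, `r ∈ (1,∞)`, `α ∈ (0,1)`,
then there is `C > 0` such that for every `u ∈ W₀^{1,r}((0,1),ℝ)` with weak derivative `g`,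
`‖u‖_{L^p} ≤ C (‖u‖_{L^r} + ‖g‖_{L^r})^α ‖u‖_{L^q}^{1−α}`. -/
theorem stmt9 (q p r α : ℝ) (hq : 1 ≤ q) (hp : q < p) (hr : 1 < r) (hα : α ∈ Set.Ioo (0 : ℝ) 1)
    (heq : α * (1 / q + 1 - 1 / r) = 1 / q - 1 / p) :
    ∃ C : ℝ, 0 < C ∧ ∀ u g : ℝ → ℝ,
      MemLp g (ENNReal.ofReal r) (volume.restrict (Set.Ioo (0 : ℝ) 1)) →
      (∀ x ∈ Set.Icc (0 : ℝ) 1, u x = ∫ t in (0 : ℝ)..x, g t) →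
      u 1 = 0 →
      (∫ t in Set.Ioo (0 : ℝ) 1, |u t| ^ p) ^ (1 / p)
        ≤ C * ((∫ t in Set.Ioo (0 : ℝ) 1, |u t| ^ r) ^ (1 / r)
                + (∫ t in Set.Ioo (0 : ℝ) 1, |g t| ^ r) ^ (1 / r)) ^ α
            * ((∫ t in Set.Ioo (0 : ℝ) 1, |u t| ^ q) ^ (1 / q)) ^ (1 - α) := by
  obtain ⟨hα0, hα1⟩ := hα
  have hq0 : (0:ℝ) < q := by linarith
  have hp0 : (0:ℝ) < p := by linarith
  have hr0 : (0:ℝ) < r := by linarith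
  set r' : ℝ := r / (r - 1) with hr'def
  have hr'0 : 0 < r' := by
    apply div_pos (by linarith) (by linarith)
  have hconj : r.HolderConjugate r' := by rw [hr'def]; exact Real.HolderConjugate.conjExponent hr
  set β : ℝ := r' / (q + r') with hβdef
  have hqr' : 0 < q + r' := by linarith
  have hβ0 : 0 < β := div_pos hr'0 hqr'
  have hβ1 : β < 1 := (div_lt_one hqr').mpr (by linarith)
  have hθ : (p - q)/p = 1 - q/p := by field_simp
  have hrr' : (1:ℝ)/r' = 1 - 1/r := by
    have hd1 : r - 1 ≠ 0 := by linarith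
    rw [hr'def]
    field_simp
  clear_value r' β
  have hαθβ : α = (p - q)/p * β := by
    have h' : α * (1/q + 1/r') = 1/q - 1/p := by
      rw [hrr']; linarith [heq]
    have hr'ne : r' ≠ 0 := ne_of_gt hr'0
    have hqne : q ≠ 0 := hq0.ne'
    have hpne : p ≠ 0 := hp0.ne'
    field_simp at h'
    rw [hβdef, div_mul_div_comm, eq_div_iff (mul_ne_zero hpne hqr'.ne')]
    apply mul_left_cancel₀ hqne
    linear_combination q * h'
  refine ⟨4, by norm_num, ?_⟩
  intro u g hg hu hu1
  haveI := aux_prob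
  set U : ℝ → ℝ := fun x => ∫ t in (0:ℝ)..x, g t with hUdef
  have hgIcc : IntegrableOn g (Set.Icc (0:ℝ) 1) volume := by
    have h1 : MemLp g 1 (volume.restrict (Set.Ioo (0:ℝ) 1)) :=
      hg.mono_exponent (by
        calc (1:ENNReal) = ENNReal.ofReal 1 := by simp
        _ ≤ ENNReal.ofReal r := ENNReal.ofReal_le_ofReal hr.le)
    have h2 : IntegrableOn g (Set.Ioo (0:ℝ) 1) volume := memLp_one_iff_integrable.mp h1
    rwa [integrableOn_Icc_iff_integrableOn_Ioo]
  have hUc : ContinuousOn U (Set.Icc (0:ℝ) 1) := by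
    have h := intervalIntegral.continuousOn_primitive_interval (a := (0:ℝ)) (b := 1) (μ := volume) (f := g)
      (by rwa [Set.uIcc_of_le zero_le_one])
    rwa [Set.uIcc_of_le zero_le_one] at h
  obtain ⟨x₀, hx₀, hmax⟩ := (isCompact_Icc).exists_isMaxOn
    (Set.nonempty_Icc.mpr zero_le_one) (hUc.abs)
  set M : ℝ := |U x₀| with hMdef
  have hM0 : 0 ≤ M := abs_nonneg _
  have hMx : ∀ x ∈ Set.Icc (0:ℝ) 1, |U x| ≤ M := hmax
  set Gr : ℝ := (∫ t in Set.Ioo (0:ℝ) 1, |g t| ^ r) ^ (1/r) with hGrdef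
  have hGr0 : 0 ≤ Gr := Real.rpow_nonneg
    (setIntegral_nonneg measurableSet_Ioo fun t _ => Real.rpow_nonneg (abs_nonneg _) _) _
  -- difference bound
  have hdiff : ∀ x ∈ Set.Icc (0:ℝ) 1, ∀ y ∈ Set.Icc (0:ℝ) 1,
      |U y - U x| ≤ Gr * |y - x| ^ (1/r') := by
    have key : ∀ x y : ℝ, x ∈ Set.Icc (0:ℝ) 1 → y ∈ Set.Icc (0:ℝ) 1 → x ≤ y →
        |U y - U x| ≤ Gr * (y - x) ^ (1/r') := by
      intro x y hx hy hxy
      have hIx : IntervalIntegrable g volume 0 x := (hgIcc.mono_set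
        (by rw [Set.uIcc_of_le hx.1]; exact Set.Icc_subset_Icc le_rfl hx.2)).intervalIntegrable
      have hIxy : IntervalIntegrable g volume x y := (hgIcc.mono_set
        (by rw [Set.uIcc_of_le hxy]; exact Set.Icc_subset_Icc hx.1 hy.2)).intervalIntegrable
      have hsum := intervalIntegral.integral_add_adjacent_intervals hIx hIxy
      have hUyx : U y - U x = ∫ t in x..y, g t := by
        rw [hUdef]; simp only []; linarith [hsum]
      rw [hUyx, intervalIntegral.integral_of_le hxy, integral_Ioc_eq_integral_Ioo]
      calc |∫ t in Set.Ioo x y, g t| ≤ ∫ t in Set.Ioo x y, |g t| := by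
            simpa [Real.norm_eq_abs] using
              norm_integral_le_integral_norm (μ := volume.restrict (Set.Ioo x y)) g
        _ ≤ Gr * (y - x) ^ (1/r') := aux_holder hconj hg hxy hx.1 hy.2
    intro x hx y hy
    rcases le_total x y with h | h
    · have h2 := key x y hx hy h
      rwa [abs_of_nonneg (by linarith : (0:ℝ) ≤ y - x)]
    · have h2 := key y x hy hx h
      rw [abs_sub_comm (U y) (U x), abs_sub_comm y x,
        abs_of_nonneg (by linarith : (0:ℝ) ≤ x - y)]
      exact h2
  -- integrability of powers of u
  have hupow : ∀ s : ℝ, 0 < s → IntegrableOn (fun t => |u t| ^ s) (Set.Ioo (0:ℝ) 1) volume := by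
    intro s hs
    have hc : ContinuousOn (fun t => |U t| ^ s) (Set.Icc (0:ℝ) 1) :=
      (hUc.abs).rpow_const (fun x _ => Or.inr hs.le)
    have hint : IntegrableOn (fun t => |U t| ^ s) (Set.Icc (0:ℝ) 1) volume :=
      hc.integrableOn_Icc
    refine (hint.mono_set Set.Ioo_subset_Icc_self).congr_fun ?_ measurableSet_Ioo
    intro t ht
    show |U t| ^ s = |u t| ^ s
    rw [show u t = U t from hu t (Set.Ioo_subset_Icc_self ht)]
  -- u is in L^r
  have huℒ : MemLp u (ENNReal.ofReal r) (volume.restrict (Set.Ioo (0:ℝ) 1)) := by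
    have hUm : AEStronglyMeasurable U (volume.restrict (Set.Ioo (0:ℝ) 1)) :=
      (hUc.mono Set.Ioo_subset_Icc_self).aestronglyMeasurable measurableSet_Ioo
    have hae : U =ᵐ[volume.restrict (Set.Ioo (0:ℝ) 1)] u :=
      (ae_restrict_mem measurableSet_Ioo).mono fun x hx =>
        (hu x (Set.Ioo_subset_Icc_self hx)).symm
    refine MemLp.ae_eq hae (MemLp.of_bound hUm M ?_)
    exact (ae_restrict_mem measurableSet_Ioo).mono fun x hx => by
      simpa [Real.norm_eq_abs] using hMx x (Set.Ioo_subset_Icc_self hx)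
  set Iq : ℝ := ∫ t in Set.Ioo (0:ℝ) 1, |u t| ^ q with hIqdef
  have hIq0 : 0 ≤ Iq := setIntegral_nonneg measurableSet_Ioo
    fun t _ => Real.rpow_nonneg (abs_nonneg _) _
  -- main interval estimate
  have main : ∀ L : ℝ, 0 ≤ L → L ≤ 1/2 → Gr * L ^ (1/r') ≤ M/2 → (M/2)^q * L ≤ Iq := by
    intro L hL0 hL2 hGL
    obtain ⟨a, b, hab, h0a, hb1, hba, hnear⟩ :
        ∃ a b : ℝ, a ≤ b ∧ 0 ≤ a ∧ b ≤ 1 ∧ b - a = L ∧ ∀ t ∈ Set.Ioo a b, |t - x₀| ≤ L := by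
      rcases le_total x₀ (1/2) with h | h
      · exact ⟨x₀, x₀ + L, by linarith, hx₀.1, by linarith, by ring,
          fun t ht => abs_le.mpr ⟨by linarith [ht.1], by linarith [ht.2]⟩⟩
      · exact ⟨x₀ - L, x₀, by linarith, by linarith, hx₀.2, by ring,
          fun t ht => abs_le.mpr ⟨by linarith [ht.1], by linarith [ht.2]⟩⟩
    have hsub : Set.Ioo a b ⊆ Set.Ioo (0:ℝ) 1 := fun t ht =>
      ⟨by linarith [ht.1], by linarith [ht.2]⟩
    have hlow : ∀ t ∈ Set.Ioo a b, M/2 ≤ |u t| := by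
      intro t ht
      have htI : t ∈ Set.Icc (0:ℝ) 1 := ⟨by linarith [ht.1], by linarith [ht.2]⟩
      have h1 := hdiff t htI x₀ hx₀
      have h2 : Gr * |x₀ - t| ^ (1/r') ≤ Gr * L ^ (1/r') := by
        apply mul_le_mul_of_nonneg_left _ hGr0
        apply Real.rpow_le_rpow (abs_nonneg _) _ (one_div_nonneg.mpr hr'0.le)
        rw [abs_sub_comm]; exact hnear t ht
      have h3 : M - |U t| ≤ |U x₀ - U t| := by
        calc M - |U t| = |U x₀| - |U t| := rfl
          _ ≤ |U x₀ - U t| := abs_sub_abs_le_abs_sub _ _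
      rw [hu t htI]
      linarith
    have hIqint := hupow q hq0
    have h4 : (M/2)^q * L = ∫ _ in Set.Ioo a b, (M/2)^q := by
      rw [setIntegral_const, Real.volume_real_Ioo_of_le hab, hba,
        smul_eq_mul, mul_comm]
    rw [h4]
    calc ∫ _ in Set.Ioo a b, (M/2)^q ≤ ∫ t in Set.Ioo a b, |u t| ^ q := by
          apply setIntegral_mono_on
          · exact integrableOn_const (by simp [Real.volume_Ioo])
          · exact hIqint.mono_set hsub
          · exact measurableSet_Ioo
          · intro t ht
            exact Real.rpow_le_rpow (by linarith) (hlow t ht) hq0.le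
      _ ≤ Iq := setIntegral_mono_set hIqint
          (Filter.Eventually.of_forall fun t => Real.rpow_nonneg (abs_nonneg _) _)
          (HasSubset.Subset.eventuallyLE hsub)
  -- M is bounded by the W^{1,r} norm
  have hMA : M ≤ (∫ t in Set.Ioo (0:ℝ) 1, |u t| ^ r) ^ (1/r) + Gr := by
    have h1 : ∀ y ∈ Set.Ioo (0:ℝ) 1, M - Gr ≤ |u y| := by
      intro y hy
      have hyI := Set.Ioo_subset_Icc_self hy
      have h2 := hdiff y hyI x₀ hx₀
      have h3 : |x₀ - y| ^ (1/r') ≤ 1 := Real.rpow_le_one (abs_nonneg _)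
        (abs_le.mpr ⟨by linarith [hx₀.1, hy.2], by linarith [hx₀.2, hy.1]⟩)
        (one_div_nonneg.mpr hr'0.le)
      have h4 : M - |U y| ≤ |U x₀ - U y| := by
        calc M - |U y| = |U x₀| - |U y| := rfl
          _ ≤ |U x₀ - U y| := abs_sub_abs_le_abs_sub _ _
      rw [hu y hyI]
      nlinarith [mul_le_mul_of_nonneg_left h3 hGr0]
    have h5 : M - Gr ≤ ∫ t in Set.Ioo (0:ℝ) 1, |u t| := by
      have h6 : ∫ _ in Set.Ioo (0:ℝ) 1, (M - Gr) = M - Gr := by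
        simp [Real.volume_Ioo]
      rw [← h6]
      apply setIntegral_mono_on
      · exact integrableOn_const (by simp [Real.volume_Ioo])
      · have := hupow 1 one_pos
        simpa [Real.rpow_one] using this
      · exact measurableSet_Ioo
      · exact h1
    have h7 : ∫ t in Set.Ioo (0:ℝ) 1, |u t| ≤
        (∫ t in Set.Ioo (0:ℝ) 1, |u t| ^ r) ^ (1/r) := by
      have h8 := aux_holder hconj huℒ zero_le_one le_rfl le_rfl
      simpa [Real.one_rpow] using h8
    linarith
  -- notation for the final computation
  set Ir : ℝ := ∫ t in Set.Ioo (0:ℝ) 1, |u t| ^ r with hIrdef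
  set A : ℝ := Ir ^ (1/r) + Gr with hAdef
  have hIr0 : 0 ≤ Ir := setIntegral_nonneg measurableSet_Ioo
    fun t _ => Real.rpow_nonneg (abs_nonneg _) _
  have hA0 : 0 ≤ A := add_nonneg (Real.rpow_nonneg hIr0 _) hGr0
  set Nq : ℝ := Iq ^ (1/q) with hNqdef
  have hNq0 : 0 ≤ Nq := Real.rpow_nonneg hIq0 _
  have hNqq : Nq ^ q = Iq := by
    rw [hNqdef, ← Real.rpow_mul hIq0, one_div_mul_cancel hq0.ne', Real.rpow_one]
  -- Step I : L^p bound by sup norm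
  have hIp0 : 0 ≤ ∫ t in Set.Ioo (0:ℝ) 1, |u t| ^ p := setIntegral_nonneg measurableSet_Ioo
    fun t _ => Real.rpow_nonneg (abs_nonneg _) _
  have stepI : (∫ t in Set.Ioo (0:ℝ) 1, |u t| ^ p) ≤ M ^ (p - q) * Iq := by
    have hpt : ∀ t ∈ Set.Ioo (0:ℝ) 1, |u t| ^ p ≤ M ^ (p-q) * |u t| ^ q := by
      intro t ht
      have htI := Set.Ioo_subset_Icc_self ht
      have hut : |u t| ≤ M := by rw [hu t htI]; exact hMx t htI
      have hut0 : 0 ≤ |u t| := abs_nonneg _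
      rcases eq_or_lt_of_le hut0 with h0 | h0
      · rw [← h0, Real.zero_rpow (by linarith : p ≠ 0)]
        have : ((0:ℝ))^q = 0 := Real.zero_rpow (by linarith)
        rw [this, mul_zero]
      · have hsplit : |u t| ^ p = |u t| ^ (p - q) * |u t| ^ q := by
          rw [← Real.rpow_add h0]; ring_nf
        rw [hsplit]
        apply mul_le_mul_of_nonneg_right _ (Real.rpow_nonneg hut0 _)
        exact Real.rpow_le_rpow hut0 hut (by linarith)
    calc (∫ t in Set.Ioo (0:ℝ) 1, |u t| ^ p)
        ≤ ∫ t in Set.Ioo (0:ℝ) 1, M ^ (p-q) * |u t| ^ q := by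
          exact setIntegral_mono_on (hupow p hp0) ((hupow q hq0).const_mul _)
            measurableSet_Ioo hpt
      _ = M ^ (p-q) * Iq := by rw [hIqdef, ← integral_const_mul]
  clear_value U M Gr Iq Ir A Nq
  have claimB : M ≤ 4 * A ^ β * Nq ^ (1 - β) := by
    rcases eq_or_lt_of_le hM0 with hMz | hMpos
    · rw [← hMz]
      exact mul_nonneg (mul_nonneg (by norm_num) (Real.rpow_nonneg hA0 _))
        (Real.rpow_nonneg hNq0 _)
    rcases le_or_gt (Gr * (1/2:ℝ) ^ ((1:ℝ)/r')) (M/2) with hcase | hcase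
    · have h1 := main (1/2) (by norm_num) le_rfl hcase
      have h2 : M/2 ≤ 2 * Nq := by
        have h3 : (M/2)^q ≤ 2 * Iq := by linarith [h1]
        have h4 : ((M/2:ℝ)^q)^(1/q) = M/2 := by
          rw [← Real.rpow_mul (by linarith : (0:ℝ) ≤ M/2), mul_one_div_cancel hq0.ne',
            Real.rpow_one]
        calc M/2 = ((M/2)^q)^(1/q) := h4.symm
          _ ≤ (2*Iq)^(1/q) := Real.rpow_le_rpow (Real.rpow_nonneg (by linarith) _) h3
              (one_div_nonneg.mpr hq0.le)
          _ = 2^(1/q) * Nq := by rw [Real.mul_rpow (by norm_num) hIq0, ← hNqdef]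
          _ ≤ 2 * Nq := by
              have h5 : (2:ℝ)^(1/q) ≤ 2 := by
                have h6 : (2:ℝ)^(1/q) ≤ 2^(1:ℝ) := Real.rpow_le_rpow_of_exponent_le
                  one_le_two (by rw [div_le_one hq0]; linarith)
                rwa [Real.rpow_one] at h6
              exact mul_le_mul_of_nonneg_right h5 hNq0
      have hM4 : M ≤ 4 * Nq := by linarith
      have hsplit : β + (1 - β) = 1 := by ring
      calc M = M ^ β * M ^ (1-β) := by
            rw [← Real.rpow_add hMpos, hsplit, Real.rpow_one]
        _ ≤ A ^ β * (4*Nq) ^ (1-β) := by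
            apply mul_le_mul (Real.rpow_le_rpow hM0 hMA hβ0.le)
              (Real.rpow_le_rpow hM0 hM4 (by linarith)) (Real.rpow_nonneg hM0 _)
              (Real.rpow_nonneg hA0 _)
        _ = 4 ^ (1-β) * (A ^ β * Nq ^ (1-β)) := by
            rw [Real.mul_rpow (by norm_num) hNq0]; ring
        _ ≤ 4 * (A ^ β * Nq ^ (1-β)) := by
            have h6 : (4:ℝ)^(1-β) ≤ 4 := by
              have h7 : (4:ℝ)^(1-β) ≤ 4^(1:ℝ) := Real.rpow_le_rpow_of_exponent_le
                (by norm_num) (by linarith)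
              rwa [Real.rpow_one] at h7
            exact mul_le_mul_of_nonneg_right h6
              (mul_nonneg (Real.rpow_nonneg hA0 _) (Real.rpow_nonneg hNq0 _))
        _ = 4 * A ^ β * Nq ^ (1-β) := by ring
    · have hGrpos : 0 < Gr := by
        rcases hGr0.eq_or_lt with h | h
        · exfalso; rw [← h] at hcase; simp at hcase; linarith
        · exact h
      have hMG0 : 0 < M/(2*Gr) := div_pos hMpos (by linarith)
      set δ : ℝ := (M/(2*Gr)) ^ r' with hδdef
      have hδ0 : 0 ≤ δ := Real.rpow_nonneg hMG0.le _
      have hδhalf : δ ≤ 1/2 := by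
        have h1 : M/(2*Gr) ≤ (1/2:ℝ)^((1:ℝ)/r') := by
          rw [div_le_iff₀ (by linarith : (0:ℝ) < 2*Gr)]
          nlinarith [hcase]
        have h2 : δ ≤ (((1/2):ℝ)^((1:ℝ)/r'))^r' := Real.rpow_le_rpow hMG0.le h1 hr'0.le
        rwa [← Real.rpow_mul (by norm_num), one_div_mul_cancel hr'0.ne', Real.rpow_one] at h2
      have hδL : Gr * δ ^ (1/r') = M/2 := by
        rw [hδdef, ← Real.rpow_mul hMG0.le, mul_one_div_cancel hr'0.ne', Real.rpow_one]
        field_simp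
      have h1 := main δ hδ0 hδhalf (le_of_eq hδL)
      have h2 : (M/2)^(q + r') ≤ Nq ^ q * Gr ^ r' := by
        have h3 : (M/2)^q * δ * Gr^r' ≤ Iq * Gr^r' :=
          mul_le_mul_of_nonneg_right h1 (Real.rpow_nonneg hGr0 _)
        have h4 : (M/2)^q * δ * Gr^r' = (M/2)^(q+r') := by
          rw [hδdef, Real.rpow_add (by linarith : (0:ℝ) < M/2), mul_assoc,
            ← Real.mul_rpow hMG0.le hGr0]
          congr 2
          field_simp
        rw [hNqq, ← h4]
        exact h3
      have h5 : M/2 ≤ Nq^(1-β) * Gr^β := by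
        have h6 : ((M/2:ℝ)^(q+r'))^(1/(q+r')) = M/2 := by
          rw [← Real.rpow_mul (by linarith : (0:ℝ) ≤ M/2), mul_one_div_cancel hqr'.ne',
            Real.rpow_one]
        have e1 : q * (1/(q+r')) = 1 - β := by rw [hβdef]; field_simp; ring
        have e2 : r' * (1/(q+r')) = β := by rw [hβdef]; field_simp
        calc M/2 = ((M/2)^(q+r'))^(1/(q+r')) := h6.symm
          _ ≤ (Nq^q * Gr^r')^(1/(q+r')) := Real.rpow_le_rpow
              (Real.rpow_nonneg (by linarith) _) h2 (one_div_nonneg.mpr hqr'.le)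
          _ = (Nq^q)^(1/(q+r')) * (Gr^r')^(1/(q+r')) := Real.mul_rpow
              (Real.rpow_nonneg hNq0 _) (Real.rpow_nonneg hGr0 _)
          _ = Nq^(1-β) * Gr^β := by
              rw [← Real.rpow_mul hNq0, ← Real.rpow_mul hGr0, e1, e2]
      have hGrA : Gr ≤ A := by
        rw [hAdef]; exact le_add_of_nonneg_left (Real.rpow_nonneg hIr0 _)
      have h7 : Gr ^ β ≤ A ^ β := Real.rpow_le_rpow hGr0 hGrA hβ0.le
      calc M ≤ 2 * (Nq^(1-β) * Gr^β) := by linarith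
        _ ≤ 2 * (Nq^(1-β) * A^β) := by
            apply mul_le_mul_of_nonneg_left
              (mul_le_mul_of_nonneg_left h7 (Real.rpow_nonneg hNq0 _)) (by norm_num)
        _ ≤ 4 * A^β * Nq^(1-β) := by
            nlinarith [Real.rpow_nonneg hNq0 (1-β), Real.rpow_nonneg hA0 β]
  -- final assembly
  rcases eq_or_lt_of_le hNq0 with hNqz | hNqpos
  · have hMz : M = 0 := by
      have h2 := claimB
      rw [← hNqz, Real.zero_rpow (by linarith : (1:ℝ) - β ≠ 0), mul_zero] at h2
      linarith
    have hIpz : (∫ t in Set.Ioo (0:ℝ) 1, |u t| ^ p) = 0 := by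
      have h2 := stepI
      rw [hMz, Real.zero_rpow (by linarith : p - q ≠ 0), zero_mul] at h2
      linarith
    rw [hIpz, Real.zero_rpow (one_div_ne_zero hp0.ne')]
    exact mul_nonneg (mul_nonneg (by norm_num) (Real.rpow_nonneg hA0 _))
      (Real.rpow_nonneg hNq0 _)
  · have hstep : (∫ t in Set.Ioo (0:ℝ) 1, |u t| ^ p) ^ ((1:ℝ)/p) ≤ (M^(p-q) * Iq)^((1:ℝ)/p) :=
      Real.rpow_le_rpow hIp0 stepI (one_div_nonneg.mpr hp0.le)
    have e1 : (M ^ (p-q) * Iq) ^ ((1:ℝ)/p) = M ^ ((p-q)/p) * Nq ^ (q/p) := by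
      rw [Real.mul_rpow (Real.rpow_nonneg hM0 _) hIq0, ← Real.rpow_mul hM0, ← hNqq,
        ← Real.rpow_mul hNq0, mul_one_div, mul_one_div]
    have e2 : M ^ ((p-q)/p) ≤ (4 * A ^ β * Nq ^ (1-β)) ^ ((p-q)/p) :=
      Real.rpow_le_rpow hM0 claimB (div_nonneg (by linarith) hp0.le)
    have e3 : (4 * A ^ β * Nq ^ (1-β)) ^ ((p-q)/p)
        = 4 ^ ((p-q)/p) * A ^ (β*((p-q)/p)) * Nq ^ ((1-β)*((p-q)/p)) := by
      rw [Real.mul_rpow (mul_nonneg (by norm_num) (Real.rpow_nonneg hA0 _))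
        (Real.rpow_nonneg hNq0 _),
        Real.mul_rpow (by norm_num) (Real.rpow_nonneg hA0 _),
        ← Real.rpow_mul hA0, ← Real.rpow_mul hNq0]
    have hβθ : β * ((p-q)/p) = α := by rw [hαθβ]; ring
    have hcomb : Nq ^ ((1-β)*((p-q)/p)) * Nq ^ (q/p) = Nq ^ (1-α) := by
      rw [← Real.rpow_add hNqpos]
      congr 1
      rw [hαθβ]
      field_simp
      ring
    have h4p : (4:ℝ) ^ ((p-q)/p) ≤ 4 := by
      have h6 : (4:ℝ)^((p-q)/p) ≤ 4^(1:ℝ) := Real.rpow_le_rpow_of_exponent_le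
        (by norm_num) (by rw [div_le_one hp0]; linarith)
      rwa [Real.rpow_one] at h6
    calc (∫ t in Set.Ioo (0:ℝ) 1, |u t| ^ p) ^ ((1:ℝ)/p)
        ≤ (M^(p-q) * Iq)^((1:ℝ)/p) := hstep
      _ = M^((p-q)/p) * Nq^(q/p) := e1
      _ ≤ (4*A^β*Nq^(1-β))^((p-q)/p) * Nq^(q/p) :=
          mul_le_mul_of_nonneg_right e2 (Real.rpow_nonneg hNq0 _)
      _ = 4^((p-q)/p) * A^(β*((p-q)/p)) * (Nq^((1-β)*((p-q)/p)) * Nq^(q/p)) := by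
          rw [e3]; ring
      _ = 4^((p-q)/p) * A^α * Nq^(1-α) := by rw [hβθ, hcomb]
      _ ≤ 4 * A^α * Nq^(1-α) := by
          apply mul_le_mul_of_nonneg_right
            (mul_le_mul_of_nonneg_right h4p (Real.rpow_nonneg hA0 _))
            (Real.rpow_nonneg hNq0 _)
end

section
/- Let c_1 ∈ ℝ and let v, w ∈ W_0^{1,2}((0,1),ℝ) with weak derivatives g_v, g_w ∈ L²((0,1),ℝ). Then: (i) the function v² belongs to W^{1,2}((0,1),ℝ) with weak derivative 2·v·g_v, i.e. v·g_v ∈ L²((0,1),ℝ) and v(x)² = ∫_0^x 2·v(t)·g_v(t) dt for all x ∈ [0,1]; and (ii) the Burgers nonlinearity F(u) = c_1·u·∂u satisfies the local Lipschitz estimate ‖c_1·(v·g_v − w·g_w)‖_{L²((0,1))} ≤ (|c_1|/√3)·(‖g_v‖_{L²((0,1))} + ‖g_w‖_{L²((0,1))})·‖g_v − g_w‖_{L²((0,1))}. -/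
open MeasureTheory Set Filter

section Helpers

variable {α : Type*} [MeasurableSpace α] {μ : Measure α}

lemma my_int_mul {f g : α → ℝ} (hf : MemLp f 2 μ) (hg : MemLp g 2 μ) :
    Integrable (fun a => f a * g a) μ := by
  have hd : Integrable (fun a => (f a ^ 2 + g a ^ 2) / 2) μ :=
    (hf.integrable_sq.add hg.integrable_sq).div_const 2
  refine Integrable.mono' hd (hf.1.mul hg.1) (.of_forall fun a => ?_)
  rw [Real.norm_eq_abs, abs_mul]
  nlinarith [sq_nonneg (|f a| - |g a|), sq_abs (f a), sq_abs (g a),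
    abs_nonneg (f a), abs_nonneg (g a)]

lemma my_cs {f g : α → ℝ} (hf : MemLp f 2 μ) (hg : MemLp g 2 μ) :
    ∫ a, f a * g a ∂μ ≤ Real.sqrt (∫ a, f a ^ 2 ∂μ) * Real.sqrt (∫ a, g a ^ 2 ∂μ) := by
  have h2 : ENNReal.ofReal (2:ℝ) = 2 := by norm_num
  have hfa : MemLp (fun a => |f a|) (ENNReal.ofReal (2:ℝ)) μ := by
    rw [h2]; simpa [Real.norm_eq_abs] using hf.norm
  have hga : MemLp (fun a => |g a|) (ENNReal.ofReal (2:ℝ)) μ := by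
    rw [h2]; simpa [Real.norm_eq_abs] using hg.norm
  have hcs := integral_mul_le_Lp_mul_Lq_of_nonneg
      Real.HolderConjugate.two_two
      (Eventually.of_forall fun a => abs_nonneg (f a))
      (Eventually.of_forall fun a => abs_nonneg (g a)) hfa hga
  have hfa' : MemLp (fun a => |f a|) 2 μ := by rw [← h2]; exact hfa
  have hga' : MemLp (fun a => |g a|) 2 μ := by rw [← h2]; exact hga
  have h1 : ∫ a, f a * g a ∂μ ≤ ∫ a, |f a| * |g a| ∂μ :=
    integral_mono (my_int_mul hf hg) (my_int_mul hfa' hga')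
      fun a => le_trans (le_abs_self _) (by rw [abs_mul])
  refine h1.trans (le_of_le_of_eq hcs ?_)
  have e1 : ∀ h : α → ℝ, ∫ a, |h a| ^ (2:ℝ) ∂μ = ∫ a, h a ^ 2 ∂μ := fun h =>
    integral_congr_ae (.of_forall fun a => by
      show |h a| ^ (2:ℝ) = h a ^ 2
      rw [show (2:ℝ) = ((2:ℕ):ℝ) by norm_num, Real.rpow_natCast, sq_abs])
  rw [e1 f, e1 g, ← Real.sqrt_eq_rpow, ← Real.sqrt_eq_rpow]

lemma my_minkowski {f g : α → ℝ} (hf : MemLp f 2 μ) (hg : MemLp g 2 μ) :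
    Real.sqrt (∫ a, (f a + g a) ^ 2 ∂μ)
      ≤ Real.sqrt (∫ a, f a ^ 2 ∂μ) + Real.sqrt (∫ a, g a ^ 2 ∂μ) := by
  have hA : Real.sqrt (∫ a, f a ^ 2 ∂μ) ^ 2 = ∫ a, f a ^ 2 ∂μ :=
    Real.sq_sqrt (integral_nonneg fun a => sq_nonneg _)
  have hB : Real.sqrt (∫ a, g a ^ 2 ∂μ) ^ 2 = ∫ a, g a ^ 2 ∂μ :=
    Real.sq_sqrt (integral_nonneg fun a => sq_nonneg _)
  have hfg := my_cs hf hg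
  have i1 : Integrable (fun a => f a ^ 2) μ := hf.integrable_sq
  have i2 : Integrable (fun a => 2 * (f a * g a)) μ := (my_int_mul hf hg).const_mul 2
  have i3 : Integrable (fun a => g a ^ 2) μ := hg.integrable_sq
  have i12 : Integrable (fun a => f a ^ 2 + 2 * (f a * g a)) μ := i1.add i2
  have hexp : ∫ a, (f a + g a) ^ 2 ∂μ
      = ∫ a, f a ^ 2 ∂μ + 2 * ∫ a, f a * g a ∂μ + ∫ a, g a ^ 2 ∂μ := by
    have h1 : ∫ a, (f a + g a) ^ 2 ∂μ
        = ∫ a, (f a ^ 2 + 2 * (f a * g a) + g a ^ 2) ∂μ :=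
      integral_congr_ae (.of_forall fun a => by ring)
    rw [h1, integral_add i12 i3, integral_add i1 i2, integral_const_mul]
  have key : ∫ a, (f a + g a) ^ 2 ∂μ
      ≤ (Real.sqrt (∫ a, f a ^ 2 ∂μ) + Real.sqrt (∫ a, g a ^ 2 ∂μ)) ^ 2 := by
    rw [hexp]; nlinarith [hfg, hA, hB]
  calc Real.sqrt (∫ a, (f a + g a) ^ 2 ∂μ)
      ≤ Real.sqrt ((Real.sqrt (∫ a, f a ^ 2 ∂μ) + Real.sqrt (∫ a, g a ^ 2 ∂μ)) ^ 2) :=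
        Real.sqrt_le_sqrt key
    _ = _ := Real.sqrt_sq (by positivity)

end Helpers

lemma my_primitive_bound {g : ℝ → ℝ}
    (hg : MemLp g 2 (volume.restrict (Set.Ioo (0:ℝ) 1)))
    (h0 : (∫ t in Set.Ioc (0:ℝ) 1, g t) = 0)
    {x : ℝ} (hx0 : 0 ≤ x) (hx1 : x ≤ 1) :
    |∫ t in Set.Ioc (0:ℝ) x, g t| ≤ Real.sqrt (∫ t in Set.Ioo (0:ℝ) 1, g t ^ 2) / 2 := by
  have hrest : volume.restrict (Set.Ioo (0:ℝ) 1) = volume.restrict (Set.Icc 0 1) :=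
    Measure.restrict_congr_set Ioo_ae_eq_Icc
  have hgI : MemLp g 2 (volume.restrict (Set.Icc (0:ℝ) 1)) := by rwa [hrest] at hg
  have hsub1 : Set.Ioc (0:ℝ) x ⊆ Set.Icc 0 1 := fun t ht => ⟨ht.1.le, ht.2.trans hx1⟩
  have hsub2 : Set.Ioc x 1 ⊆ Set.Icc 0 1 := fun t ht => ⟨hx0.trans ht.1.le, ht.2⟩
  have hg1 : MemLp g 2 (volume.restrict (Set.Ioc (0:ℝ) x)) :=
    hgI.mono_measure (Measure.restrict_mono hsub1 le_rfl)
  have hg2 : MemLp g 2 (volume.restrict (Set.Ioc x 1)) :=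
    hgI.mono_measure (Measure.restrict_mono hsub2 le_rfl)
  haveI : IsFiniteMeasure (volume.restrict (Set.Ioc (0:ℝ) x)) :=
    ⟨by rw [Measure.restrict_apply_univ]; exact measure_Ioc_lt_top⟩
  haveI : IsFiniteMeasure (volume.restrict (Set.Ioc x 1)) :=
    ⟨by rw [Measure.restrict_apply_univ]; exact measure_Ioc_lt_top⟩
  set A := ∫ t in Set.Ioc (0:ℝ) x, g t with hA_def
  set B := ∫ t in Set.Ioc x 1, g t with hB_def
  set P := ∫ t in Set.Ioc (0:ℝ) x, g t ^ 2 with hP_def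
  set Q := ∫ t in Set.Ioc x 1, g t ^ 2 with hQ_def
  set T := ∫ t in Set.Ioo (0:ℝ) 1, g t ^ 2 with hT_def
  have hint1 : IntegrableOn g (Set.Ioc (0:ℝ) x) volume :=
    memLp_one_iff_integrable.1 (hg1.mono_exponent one_le_two)
  have hint2 : IntegrableOn g (Set.Ioc x 1) volume :=
    memLp_one_iff_integrable.1 (hg2.mono_exponent one_le_two)
  have hsplit : A + B = 0 := by
    rw [hA_def, hB_def, ← setIntegral_union (Set.Ioc_disjoint_Ioc_of_le le_rfl) measurableSet_Ioc
      hint1 hint2, Set.Ioc_union_Ioc_eq_Ioc hx0 hx1, h0]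
  have hsplitsq : P + Q = T := by
    rw [hP_def, hQ_def, hT_def, ← integral_Ioc_eq_integral_Ioo,
      ← setIntegral_union (Set.Ioc_disjoint_Ioc_of_le le_rfl) measurableSet_Ioc
        hg1.integrable_sq hg2.integrable_sq, Set.Ioc_union_Ioc_eq_Ioc hx0 hx1]
  have habs1 : MemLp (fun t => |g t|) 2 (volume.restrict (Set.Ioc (0:ℝ) x)) := by
    simpa [Real.norm_eq_abs] using hg1.norm
  have habs2 : MemLp (fun t => |g t|) 2 (volume.restrict (Set.Ioc x 1)) := by
    simpa [Real.norm_eq_abs] using hg2.norm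
  have hone1 : MemLp (fun _ : ℝ => (1:ℝ)) 2 (volume.restrict (Set.Ioc (0:ℝ) x)) :=
    memLp_const 1
  have hone2 : MemLp (fun _ : ℝ => (1:ℝ)) 2 (volume.restrict (Set.Ioc x 1)) :=
    memLp_const 1
  have hsqa : ∀ s : Set ℝ, (∫ t in s, |g t| ^ 2) = ∫ t in s, g t ^ 2 := fun s =>
    integral_congr_ae (.of_forall fun t => by show |g t| ^ 2 = g t ^ 2; rw [sq_abs])
  have hconst1 : (∫ t in Set.Ioc (0:ℝ) x, (1:ℝ) ^ 2) = x := by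
    simp [Real.volume_Ioc, ENNReal.toReal_ofReal hx0, hx0]
  have hconst2 : (∫ t in Set.Ioc x 1, (1:ℝ) ^ 2) = 1 - x := by
    simp [Real.volume_Ioc, ENNReal.toReal_ofReal (sub_nonneg.2 hx1), hx1]
  have hAb : |A| ≤ Real.sqrt P * Real.sqrt x := by
    have h1 : |A| ≤ ∫ t in Set.Ioc (0:ℝ) x, |g t| := by
      simpa [Real.norm_eq_abs] using
        norm_integral_le_integral_norm (μ := volume.restrict (Set.Ioc (0:ℝ) x)) g
    have h2 := my_cs habs1 hone1
    simp only [mul_one] at h2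
    rw [hsqa, hconst1] at h2
    exact h1.trans h2
  have hBb : |B| ≤ Real.sqrt Q * Real.sqrt (1 - x) := by
    have h1 : |B| ≤ ∫ t in Set.Ioc x 1, |g t| := by
      simpa [Real.norm_eq_abs] using
        norm_integral_le_integral_norm (μ := volume.restrict (Set.Ioc x 1)) g
    have h2 := my_cs habs2 hone2
    simp only [mul_one] at h2
    rw [hsqa, hconst2] at h2
    exact h1.trans h2
  have hP0 : 0 ≤ P := integral_nonneg fun t => sq_nonneg _
  have hQ0 : 0 ≤ Q := integral_nonneg fun t => sq_nonneg _
  have hT0 : 0 ≤ T := integral_nonneg fun t => sq_nonneg _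
  have hBA : |B| = |A| := by rw [show B = -A by linarith, abs_neg]
  have key : |A| ^ 2 ≤ T / 4 := by
    have hm : |A| * |B| ≤ (Real.sqrt P * Real.sqrt x) * (Real.sqrt Q * Real.sqrt (1 - x)) :=
      mul_le_mul hAb hBb (abs_nonneg B) (by positivity)
    have h1 : Real.sqrt P * Real.sqrt Q ≤ (P + Q) / 2 := by
      nlinarith [Real.sq_sqrt hP0, Real.sq_sqrt hQ0, sq_nonneg (Real.sqrt P - Real.sqrt Q)]
    have h2 : Real.sqrt x * Real.sqrt (1 - x) ≤ 1 / 2 := by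
      nlinarith [Real.sq_sqrt hx0, Real.sq_sqrt (sub_nonneg.2 hx1),
        sq_nonneg (Real.sqrt x - Real.sqrt (1 - x))]
    nlinarith [hm, hBA, Real.sqrt_nonneg P, Real.sqrt_nonneg Q, Real.sqrt_nonneg x,
      Real.sqrt_nonneg (1 - x), hsplitsq, abs_nonneg A,
      mul_le_mul h1 h2 (by positivity) (by positivity)]
  have h := Real.sqrt_le_sqrt key
  rwa [Real.sqrt_sq_eq_abs, abs_abs, show T / 4 = (Real.sqrt T / 2) ^ 2 by
    rw [div_pow, Real.sq_sqrt hT0]; norm_num, Real.sqrt_sq (by positivity)] at h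

lemma my_fubini_sq {g : ℝ → ℝ} (hg1 : IntegrableOn g (Set.Icc (0:ℝ) 1) volume)
    {x : ℝ} (hx0 : 0 ≤ x) (hx1 : x ≤ 1) :
    (∫ t in Set.Ioc (0:ℝ) x, g t) ^ 2
      = ∫ t in Set.Ioc (0:ℝ) x, 2 * (∫ s in Set.Ioc (0:ℝ) t, g s) * g t := by
  have hsub : Set.Ioc (0:ℝ) x ⊆ Set.Icc 0 1 := fun t ht => ⟨ht.1.le, ht.2.trans hx1⟩
  have hgx : IntegrableOn g (Set.Ioc (0:ℝ) x) volume := hg1.mono_set hsub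
  set μ := volume.restrict (Set.Ioc (0:ℝ) x) with hμ
  set V : ℝ → ℝ := fun t => ∫ s in Set.Ioc (0:ℝ) t, g s with hV
  have hVcont : ContinuousOn V (Set.Icc (0:ℝ) 1) := intervalIntegral.continuousOn_primitive hg1
  have hVmeas : AEStronglyMeasurable V μ :=
    (hVcont.mono hsub).aestronglyMeasurable measurableSet_Ioc
  set M := ∫ s in Set.Ioc (0:ℝ) 1, |g s| with hM
  have hg01 : IntegrableOn g (Set.Ioc (0:ℝ) 1) volume := hg1.mono_set Set.Ioc_subset_Icc_self
  have hVbdd : ∀ t, 0 ≤ t → t ≤ 1 → |V t| ≤ M := by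
    intro t h0 h1
    calc |V t| ≤ ∫ s in Set.Ioc (0:ℝ) t, |g s| := by
          simpa [Real.norm_eq_abs] using
            norm_integral_le_integral_norm (μ := volume.restrict (Set.Ioc (0:ℝ) t)) g
      _ ≤ M := setIntegral_mono_set hg01.abs (.of_forall fun s => abs_nonneg _)
          (HasSubset.Subset.eventuallyLE (Set.Ioc_subset_Ioc le_rfl h1))
  have hgV : Integrable (fun t => g t * V t) μ := by
    refine Integrable.mono' (hgx.abs.const_mul M) (hgx.1.mul hVmeas) ?_
    rw [ae_restrict_iff' measurableSet_Ioc]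
    refine Eventually.of_forall fun t ht => ?_
    rw [Real.norm_eq_abs, abs_mul, mul_comm M _]
    exact mul_le_mul_of_nonneg_left (hVbdd t ht.1.le (ht.2.trans hx1)) (abs_nonneg _)
  have hprod : Integrable (fun p : ℝ × ℝ => g p.1 * g p.2) (μ.prod μ) := hgx.mul_prod hgx
  have hFmeas : AEStronglyMeasurable
      (Function.uncurry fun t s => if t < s then g t * g s else 0) (μ.prod μ) := by
    have e : (Function.uncurry fun t s : ℝ => if t < s then g t * g s else 0)
        = Set.indicator {p : ℝ × ℝ | p.1 < p.2} (fun p => g p.1 * g p.2) := by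
      funext p
      rw [Set.indicator_apply]
      rfl
    rw [e]
    exact hprod.1.indicator (measurableSet_lt measurable_fst measurable_snd)
  have hF : Integrable (Function.uncurry fun t s => if t < s then g t * g s else 0)
      (μ.prod μ) := by
    refine Integrable.mono' hprod.abs hFmeas (Eventually.of_forall fun p => ?_)
    show ‖(if p.1 < p.2 then g p.1 * g p.2 else 0)‖ ≤ |g p.1 * g p.2|
    rw [Real.norm_eq_abs]
    split_ifs
    · exact le_rfl
    · simp; positivity
  have hswap := MeasureTheory.integral_integral_swap hF
  have hdecomp : ∀ t, 0 < t → t ≤ x → (∫ s in Set.Ioc t x, g s) = V x - V t := by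
    intro t h0 htx
    have h : V x = V t + ∫ s in Set.Ioc t x, g s := by
      show (∫ s in Set.Ioc (0:ℝ) x, g s) = _
      rw [← setIntegral_union (Set.Ioc_disjoint_Ioc_of_le le_rfl) measurableSet_Ioc
        (hg01.mono_set (Set.Ioc_subset_Ioc le_rfl (htx.trans hx1)))
        (hgx.mono_set (Set.Ioc_subset_Ioc h0.le le_rfl)),
        Set.Ioc_union_Ioc_eq_Ioc h0.le htx]
    linarith
  have hL : ∀ t ∈ Set.Ioc (0:ℝ) x,
      (∫ s, (if t < s then g t * g s else 0) ∂μ) = g t * (V x - V t) := by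
    intro t ht
    have h1 : (∫ s, (if t < s then g t * g s else 0) ∂μ)
        = g t * ∫ s, (if t < s then g s else 0) ∂μ := by
      rw [← integral_const_mul]
      exact integral_congr_ae (.of_forall fun s => by
        show (if t < s then g t * g s else 0) = g t * if t < s then g s else 0
        split_ifs <;> simp)
    have h2 : (∫ s, (if t < s then g s else 0) ∂μ) = ∫ s in Set.Ioc t x, g s := by
      have e1 : (fun s => if t < s then g s else 0) = Set.indicator (Set.Ioi t) g := by
        funext s; rw [Set.indicator_apply]; rfl
      rw [e1, hμ, integral_indicator measurableSet_Ioi,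
        Measure.restrict_restrict measurableSet_Ioi, Set.inter_comm, Set.Ioc_inter_Ioi,
        sup_eq_right.mpr ht.1.le]
    rw [h1, h2, hdecomp t ht.1 ht.2]
  have hR : ∀ s ∈ Set.Ioc (0:ℝ) x,
      (∫ t, (if t < s then g t * g s else 0) ∂μ) = g s * V s := by
    intro s hs
    have h1 : (∫ t, (if t < s then g t * g s else 0) ∂μ)
        = (∫ t, (if t < s then g t else 0) ∂μ) * g s := by
      rw [← integral_mul_const]
      exact integral_congr_ae (.of_forall fun t => by
        show (if t < s then g t * g s else 0) = (if t < s then g t else 0) * g s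
        split_ifs <;> simp)
    have h2 : (∫ t, (if t < s then g t else 0) ∂μ) = V s := by
      have e1 : (fun t => if t < s then g t else 0) = Set.indicator (Set.Iio s) g := by
        funext t; rw [Set.indicator_apply]; rfl
      have e2 : Set.Iio s ∩ Set.Ioc 0 x = Set.Ioo 0 s :=
        Set.ext fun t => ⟨fun h => ⟨h.2.1, h.1⟩, fun h => ⟨h.2, h.1, h.2.le.trans hs.2⟩⟩
      rw [e1, hμ, integral_indicator measurableSet_Iio,
        Measure.restrict_restrict measurableSet_Iio, e2, hV]
      exact (integral_Ioc_eq_integral_Ioo).symm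
    rw [h1, h2, mul_comm]
  have eL : (∫ t, (∫ s, (if t < s then g t * g s else 0) ∂μ) ∂μ)
      = ∫ t in Set.Ioc (0:ℝ) x, g t * (V x - V t) :=
    setIntegral_congr_fun measurableSet_Ioc fun t ht => hL t ht
  have eR : (∫ s, (∫ t, (if t < s then g t * g s else 0) ∂μ) ∂μ)
      = ∫ s in Set.Ioc (0:ℝ) x, g s * V s :=
    setIntegral_congr_fun measurableSet_Ioc fun s hs => hR s hs
  have key : (∫ t in Set.Ioc (0:ℝ) x, g t * (V x - V t))
      = ∫ s in Set.Ioc (0:ℝ) x, g s * V s := by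
    rw [← eL, ← eR]; exact hswap
  have hsplitL : (∫ t in Set.Ioc (0:ℝ) x, g t * (V x - V t))
      = V x * V x - ∫ t in Set.Ioc (0:ℝ) x, g t * V t := by
    have e3 : (∫ t in Set.Ioc (0:ℝ) x, g t * (V x - V t))
        = (∫ t in Set.Ioc (0:ℝ) x, (g t * V x - g t * V t)) :=
      integral_congr_ae (.of_forall fun t => by ring)
    rw [e3, integral_sub (hgx.mul_const (V x)) hgV, integral_mul_const]
  have hgoal : (∫ t in Set.Ioc (0:ℝ) x, 2 * V t * g t)
      = 2 * ∫ t in Set.Ioc (0:ℝ) x, g t * V t := by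
    rw [← integral_const_mul]
    exact integral_congr_ae (.of_forall fun t => by ring)
  have hfinal : V x ^ 2 = ∫ t in Set.Ioc (0:ℝ) x, 2 * V t * g t := by
    rw [hgoal, pow_two]
    rw [hsplitL] at key
    linarith
  exact hfinal

/-- For `v, w ∈ W₀^{1,2}((0,1),ℝ)` with weak derivatives `g_v, g_w`:
(i) `v²` belongs to `W^{1,2}((0,1),ℝ)` with weak derivative `2 v g_v`; (ii) the Burgers
nonlinearity `F(u) = c₁ u ∂u` satisfies the local Lipschitz estimate
`‖c₁(v g_v − w g_w)‖_{L²} ≤ (|c₁|/√3)(‖g_v‖_{L²} + ‖g_w‖_{L²})‖g_v − g_w‖_{L²}`. -/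
theorem stmt10 (c₁ : ℝ) (v w gv gw : ℝ → ℝ)
    (hgv : MemLp gv 2 (volume.restrict (Set.Ioo (0 : ℝ) 1)))
    (hgw : MemLp gw 2 (volume.restrict (Set.Ioo (0 : ℝ) 1)))
    (hv : ∀ x ∈ Set.Icc (0 : ℝ) 1, v x = ∫ t in (0 : ℝ)..x, gv t) (hv1 : v 1 = 0)
    (hw : ∀ x ∈ Set.Icc (0 : ℝ) 1, w x = ∫ t in (0 : ℝ)..x, gw t) (hw1 : w 1 = 0) :
    (MemLp (fun t => v t * gv t) 2 (volume.restrict (Set.Ioo (0 : ℝ) 1)) ∧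
      ∀ x ∈ Set.Icc (0 : ℝ) 1, v x ^ 2 = ∫ t in (0 : ℝ)..x, 2 * v t * gv t) ∧
    Real.sqrt (∫ x in Set.Ioo (0 : ℝ) 1, (c₁ * (v x * gv x - w x * gw x)) ^ 2)
      ≤ |c₁| / Real.sqrt 3 *
          (Real.sqrt (∫ x in Set.Ioo (0 : ℝ) 1, gv x ^ 2)
            + Real.sqrt (∫ x in Set.Ioo (0 : ℝ) 1, gw x ^ 2)) *
          Real.sqrt (∫ x in Set.Ioo (0 : ℝ) 1, (gv x - gw x) ^ 2) := by
  have hrest : volume.restrict (Set.Ioo (0:ℝ) 1) = volume.restrict (Set.Icc 0 1) :=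
    Measure.restrict_congr_set Ioo_ae_eq_Icc
  haveI : IsFiniteMeasure (volume.restrict (Set.Icc (0:ℝ) 1)) :=
    ⟨by rw [Measure.restrict_apply_univ]; exact measure_Icc_lt_top⟩
  -- basic integrability
  have hgvI : MemLp gv 2 (volume.restrict (Set.Icc (0:ℝ) 1)) := by rwa [hrest] at hgv
  have hgwI : MemLp gw 2 (volume.restrict (Set.Icc (0:ℝ) 1)) := by rwa [hrest] at hgw
  have hIcc_gv : IntegrableOn gv (Set.Icc (0:ℝ) 1) volume :=
    memLp_one_iff_integrable.1 (hgvI.mono_exponent one_le_two)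
  have hIcc_gw : IntegrableOn gw (Set.Icc (0:ℝ) 1) volume :=
    memLp_one_iff_integrable.1 (hgwI.mono_exponent one_le_two)
  have hIoc_gv : IntegrableOn gv (Set.Ioc (0:ℝ) 1) volume :=
    hIcc_gv.mono_set Set.Ioc_subset_Icc_self
  have hIoc_gw : IntegrableOn gw (Set.Ioc (0:ℝ) 1) volume :=
    hIcc_gw.mono_set Set.Ioc_subset_Icc_self
  -- v and w as set integrals
  have hveq : ∀ x ∈ Set.Icc (0:ℝ) 1, v x = ∫ t in Set.Ioc (0:ℝ) x, gv t := fun x hx => by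
    rw [hv x hx, intervalIntegral.integral_of_le hx.1]
  have hweq : ∀ x ∈ Set.Icc (0:ℝ) 1, w x = ∫ t in Set.Ioc (0:ℝ) x, gw t := fun x hx => by
    rw [hw x hx, intervalIntegral.integral_of_le hx.1]
  have hv0 : (∫ t in Set.Ioc (0:ℝ) 1, gv t) = 0 := by
    rw [← hveq 1 ⟨zero_le_one, le_rfl⟩, hv1]
  have hw0 : (∫ t in Set.Ioc (0:ℝ) 1, gw t) = 0 := by
    rw [← hweq 1 ⟨zero_le_one, le_rfl⟩, hw1]
  -- sup bounds
  set a := Real.sqrt (∫ x in Set.Ioo (0:ℝ) 1, gv x ^ 2) with ha_def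
  set b := Real.sqrt (∫ x in Set.Ioo (0:ℝ) 1, gw x ^ 2) with hb_def
  set D := Real.sqrt (∫ x in Set.Ioo (0:ℝ) 1, (gv x - gw x) ^ 2) with hD_def
  have ha0 : 0 ≤ a := Real.sqrt_nonneg _
  have hb0 : 0 ≤ b := Real.sqrt_nonneg _
  have hD0 : 0 ≤ D := Real.sqrt_nonneg _
  have hva : ∀ t ∈ Set.Ioo (0:ℝ) 1, |v t| ≤ a / 2 := fun t ht => by
    rw [hveq t ⟨ht.1.le, ht.2.le⟩]
    exact my_primitive_bound hgv hv0 ht.1.le ht.2.le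
  have hwa : ∀ t ∈ Set.Ioo (0:ℝ) 1, |w t| ≤ b / 2 := fun t ht => by
    rw [hweq t ⟨ht.1.le, ht.2.le⟩]
    exact my_primitive_bound hgw hw0 ht.1.le ht.2.le
  have hgvw : MemLp (fun t => gv t - gw t) 2 (volume.restrict (Set.Ioo (0:ℝ) 1)) :=
    hgv.sub hgw
  have hgvw' : MemLp (fun t => gv t + gw t) 2 (volume.restrict (Set.Ioo (0:ℝ) 1)) :=
    hgv.add hgw
  have hvw : ∀ t ∈ Set.Ioo (0:ℝ) 1, |v t - w t| ≤ D / 2 := fun t ht => by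
    have h0 : (∫ s in Set.Ioc (0:ℝ) 1, (gv s - gw s)) = 0 := by
      rw [integral_sub hIoc_gv hIoc_gw, hv0, hw0, sub_zero]
    have heq : v t - w t = ∫ s in Set.Ioc (0:ℝ) t, (gv s - gw s) := by
      rw [hveq t ⟨ht.1.le, ht.2.le⟩, hweq t ⟨ht.1.le, ht.2.le⟩,
        integral_sub (hIoc_gv.mono_set (Set.Ioc_subset_Ioc le_rfl ht.2.le))
          (hIoc_gw.mono_set (Set.Ioc_subset_Ioc le_rfl ht.2.le))]
    rw [heq]
    exact my_primitive_bound hgvw h0 ht.1.le ht.2.le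
  -- measurability of v and w
  have hvmeas : AEStronglyMeasurable v (volume.restrict (Set.Ioo (0:ℝ) 1)) := by
    refine AEStronglyMeasurable.congr
      (((intervalIntegral.continuousOn_primitive hIcc_gv).mono
        Set.Ioo_subset_Icc_self).aestronglyMeasurable measurableSet_Ioo) ?_
    exact (ae_restrict_mem measurableSet_Ioo).mono fun t ht =>
      (hveq t ⟨ht.1.le, ht.2.le⟩).symm
  have hwmeas : AEStronglyMeasurable w (volume.restrict (Set.Ioo (0:ℝ) 1)) := by
    refine AEStronglyMeasurable.congr
      (((intervalIntegral.continuousOn_primitive hIcc_gw).mono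
        Set.Ioo_subset_Icc_self).aestronglyMeasurable measurableSet_Ioo) ?_
    exact (ae_restrict_mem measurableSet_Ioo).mono fun t ht =>
      (hweq t ⟨ht.1.le, ht.2.le⟩).symm
  -- Part (i): MemLp of v * gv
  have hmemvgv : MemLp (fun t => v t * gv t) 2 (volume.restrict (Set.Ioo (0:ℝ) 1)) := by
    refine hgv.of_le_mul (c := a/2) (hvmeas.mul hgv.1)
      ((ae_restrict_mem measurableSet_Ioo).mono fun t ht => ?_)
    rw [Real.norm_eq_abs, Real.norm_eq_abs, abs_mul]
    exact mul_le_mul_of_nonneg_right (hva t ht) (abs_nonneg _)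
  -- Part (i): weak derivative identity
  have hftc : ∀ x ∈ Set.Icc (0:ℝ) 1, v x ^ 2 = ∫ t in (0:ℝ)..x, 2 * v t * gv t := by
    intro x hx
    rw [intervalIntegral.integral_of_le hx.1, hveq x hx]
    rw [my_fubini_sq hIcc_gv hx.1 hx.2]
    refine setIntegral_congr_fun measurableSet_Ioc fun t ht => ?_
    rw [hveq t ⟨ht.1.le, ht.2.trans hx.2⟩]
  refine ⟨⟨hmemvgv, hftc⟩, ?_⟩
  -- Part (ii)
  set μ₀ := volume.restrict (Set.Ioo (0:ℝ) 1) with hμ₀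
  have hL2 : ∀ (f h : ℝ → ℝ) (C : ℝ), MemLp h 2 μ₀ → MemLp f 2 μ₀ → 0 ≤ C →
      (∀ t ∈ Set.Ioo (0:ℝ) 1, |f t| ≤ C * |h t|) →
      Real.sqrt (∫ t in Set.Ioo (0:ℝ) 1, f t ^ 2)
        ≤ C * Real.sqrt (∫ t in Set.Ioo (0:ℝ) 1, h t ^ 2) := by
    intro f h C hh hf hC hb
    have hmono : (∫ t in Set.Ioo (0:ℝ) 1, f t ^ 2)
        ≤ ∫ t in Set.Ioo (0:ℝ) 1, C ^ 2 * h t ^ 2 := by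
      refine integral_mono_ae hf.integrable_sq (hh.integrable_sq.const_mul (C ^ 2))
        ((ae_restrict_mem measurableSet_Ioo).mono fun t ht => ?_)
      have h1 := hb t ht
      show f t ^ 2 ≤ C ^ 2 * h t ^ 2
      nlinarith [sq_abs (f t), sq_abs (h t), abs_nonneg (f t), abs_nonneg (h t)]
    calc Real.sqrt (∫ t in Set.Ioo (0:ℝ) 1, f t ^ 2)
        ≤ Real.sqrt (C ^ 2 * ∫ t in Set.Ioo (0:ℝ) 1, h t ^ 2) := by
          refine Real.sqrt_le_sqrt ?_
          rw [← integral_const_mul]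
          exact hmono
      _ = C * Real.sqrt (∫ t in Set.Ioo (0:ℝ) 1, h t ^ 2) := by
          rw [Real.sqrt_mul (sq_nonneg C), Real.sqrt_sq hC]
  -- decomposition
  have hX : MemLp (fun t => c₁/2 * ((v t + w t) * (gv t - gw t))) 2 μ₀ := by
    refine hgvw.of_le_mul (c := |c₁/2| * (a/2 + b/2)) (((hvmeas.add hwmeas).mul (hgv.1.sub hgw.1)).const_mul (c₁/2))
      ((ae_restrict_mem measurableSet_Ioo).mono fun t ht => ?_)
    rw [Real.norm_eq_abs, Real.norm_eq_abs, abs_mul, abs_mul]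
    have h1 : |v t + w t| ≤ a/2 + b/2 :=
      (abs_add_le _ _).trans (add_le_add (hva t ht) (hwa t ht))
    calc |c₁/2| * (|v t + w t| * |gv t - gw t|)
        ≤ |c₁/2| * ((a/2 + b/2) * |gv t - gw t|) := by
          refine mul_le_mul_of_nonneg_left
            (mul_le_mul_of_nonneg_right h1 (abs_nonneg _)) (abs_nonneg _)
      _ = |c₁/2| * (a/2 + b/2) * |gv t - gw t| := by ring
  have hY : MemLp (fun t => c₁/2 * ((v t - w t) * (gv t + gw t))) 2 μ₀ := by
    refine hgvw'.of_le_mul (c := |c₁/2| * (D/2)) (((hvmeas.sub hwmeas).mul (hgv.1.add hgw.1)).const_mul (c₁/2))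
      ((ae_restrict_mem measurableSet_Ioo).mono fun t ht => ?_)
    rw [Real.norm_eq_abs, Real.norm_eq_abs, abs_mul, abs_mul]
    calc |c₁/2| * (|v t - w t| * |gv t + gw t|)
        ≤ |c₁/2| * ((D/2) * |gv t + gw t|) := by
          refine mul_le_mul_of_nonneg_left
            (mul_le_mul_of_nonneg_right (hvw t ht) (abs_nonneg _)) (abs_nonneg _)
      _ = |c₁/2| * (D/2) * |gv t + gw t| := by ring
  have step0 : (∫ x in Set.Ioo (0:ℝ) 1, (c₁ * (v x * gv x - w x * gw x)) ^ 2)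
      = ∫ x in Set.Ioo (0:ℝ) 1, (c₁/2 * ((v x + w x) * (gv x - gw x))
          + c₁/2 * ((v x - w x) * (gv x + gw x))) ^ 2 :=
    integral_congr_ae (.of_forall fun x => by ring)
  have step1 := my_minkowski hX hY
  have step2 : Real.sqrt (∫ t in Set.Ioo (0:ℝ) 1,
        (c₁/2 * ((v t + w t) * (gv t - gw t))) ^ 2)
      ≤ (|c₁| * (a + b) / 4) * D := by
    refine hL2 _ (fun t => gv t - gw t) (|c₁| * (a + b) / 4) hgvw hX (by positivity)
      fun t ht => ?_
    have h1 : |v t + w t| ≤ a/2 + b/2 :=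
      (abs_add_le _ _).trans (add_le_add (hva t ht) (hwa t ht))
    rw [abs_mul, abs_mul, abs_div]
    have h2 : 0 ≤ |gv t - gw t| := abs_nonneg _
    have h3 : 0 ≤ |c₁| := abs_nonneg _
    calc |c₁| / |2| * (|v t + w t| * |gv t - gw t|)
        ≤ |c₁| / |2| * ((a/2 + b/2) * |gv t - gw t|) := by
          refine mul_le_mul_of_nonneg_left
            (mul_le_mul_of_nonneg_right h1 h2) (by positivity)
      _ = |c₁| * (a + b) / 4 * |gv t - gw t| := by
          rw [show |(2:ℝ)| = 2 by norm_num]; ring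
  have step3 : Real.sqrt (∫ t in Set.Ioo (0:ℝ) 1,
        (c₁/2 * ((v t - w t) * (gv t + gw t))) ^ 2)
      ≤ (|c₁| * D / 4) * (a + b) := by
    have h4 : Real.sqrt (∫ t in Set.Ioo (0:ℝ) 1,
          (c₁/2 * ((v t - w t) * (gv t + gw t))) ^ 2)
        ≤ (|c₁| * D / 4) * Real.sqrt (∫ t in Set.Ioo (0:ℝ) 1, (gv t + gw t) ^ 2) := by
      refine hL2 _ (fun t => gv t + gw t) (|c₁| * D / 4) hgvw' hY (by positivity)
        fun t ht => ?_
      rw [abs_mul, abs_mul, abs_div]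
      calc |c₁| / |2| * (|v t - w t| * |gv t + gw t|)
          ≤ |c₁| / |2| * ((D/2) * |gv t + gw t|) := by
            refine mul_le_mul_of_nonneg_left
              (mul_le_mul_of_nonneg_right (hvw t ht) (abs_nonneg _)) (by positivity)
        _ = |c₁| * D / 4 * |gv t + gw t| := by
            rw [show |(2:ℝ)| = 2 by norm_num]; ring
    have h5 : Real.sqrt (∫ t in Set.Ioo (0:ℝ) 1, (gv t + gw t) ^ 2) ≤ a + b :=
      my_minkowski hgv hgw
    exact h4.trans (mul_le_mul_of_nonneg_left h5 (by positivity))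
  -- combine
  have hsqrt3 : Real.sqrt 3 ≤ 2 := by
    nlinarith [Real.sq_sqrt (by norm_num : (0:ℝ) ≤ 3), Real.sqrt_nonneg 3]
  have hsqrt3' : 0 < Real.sqrt 3 := Real.sqrt_pos.2 (by norm_num)
  calc Real.sqrt (∫ x in Set.Ioo (0:ℝ) 1, (c₁ * (v x * gv x - w x * gw x)) ^ 2)
      = Real.sqrt (∫ x in Set.Ioo (0:ℝ) 1, (c₁/2 * ((v x + w x) * (gv x - gw x))
          + c₁/2 * ((v x - w x) * (gv x + gw x))) ^ 2) := by rw [step0]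
    _ ≤ Real.sqrt (∫ t in Set.Ioo (0:ℝ) 1, (c₁/2 * ((v t + w t) * (gv t - gw t))) ^ 2)
        + Real.sqrt (∫ t in Set.Ioo (0:ℝ) 1, (c₁/2 * ((v t - w t) * (gv t + gw t))) ^ 2) :=
        step1
    _ ≤ (|c₁| * (a + b) / 4) * D + (|c₁| * D / 4) * (a + b) := add_le_add step2 step3
    _ = |c₁| / 2 * (a + b) * D := by ring
    _ ≤ |c₁| / Real.sqrt 3 * (a + b) * D := by
        have h6 : |c₁| / 2 ≤ |c₁| / Real.sqrt 3 := by
          rw [div_le_div_iff₀ (by norm_num) hsqrt3']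
          nlinarith [abs_nonneg c₁]
        exact mul_le_mul_of_nonneg_right
          (mul_le_mul_of_nonneg_right h6 (by positivity)) hD0
end

section
/- Let c_0 ∈ (0,∞) and c_1 ∈ ℝ. Then there exists C ∈ (0,∞) such that for every ε ∈ (0,∞) and every v, w ∈ W_0^{1,2}((0,1),ℝ) with weak derivatives g_v, g_w ∈ L²((0,1),ℝ) one has c_1·∫_0^1 (w(x)·g_v(x) + v(x)·g_w(x))·w(x) dx ≤ ε·c_0·‖g_v‖²_{L²((0,1))}·‖w‖²_{L²((0,1))} + (C/ε²)·‖w‖²_{L²((0,1))} + c_0·‖g_w‖²_{L²((0,1))}. -/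
open MeasureTheory

open Set

open MeasureTheory Set

section helpers

lemma ibp_aux (g h : ℝ → ℝ) (x : ℝ)
    (hg : IntegrableOn g (Ioc 0 x)) (hh : IntegrableOn h (Ioc 0 x)) :
    (∫ s in Ioc (0:ℝ) x, g s) * (∫ t in Ioc (0:ℝ) x, h t)
      = (∫ s in Ioc (0:ℝ) x, g s * ∫ t in Ioc (0:ℝ) s, h t)
        + (∫ t in Ioc (0:ℝ) x, (∫ s in Ioc (0:ℝ) t, g s) * h t) := by
  have hgx : Integrable g (volume.restrict (Ioc (0:ℝ) x)) := hg
  have hhx : Integrable h (volume.restrict (Ioc (0:ℝ) x)) := hh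
  set μx := volume.restrict (Ioc (0:ℝ) x) with hμx
  have hF : Integrable (fun p : ℝ × ℝ => g p.1 * h p.2) (μx.prod μx) := hgx.mul_prod hhx
  have hm1 : MeasurableSet {p : ℝ × ℝ | p.2 ≤ p.1} :=
    measurableSet_le measurable_snd measurable_fst
  have hm2 : MeasurableSet {p : ℝ × ℝ | p.1 < p.2} :=
    measurableSet_lt measurable_fst measurable_snd
  have hF1 : Integrable ({p : ℝ × ℝ | p.2 ≤ p.1}.indicator fun p => g p.1 * h p.2)
      (μx.prod μx) := hF.indicator hm1
  have hF2 : Integrable ({p : ℝ × ℝ | p.1 < p.2}.indicator fun p => g p.1 * h p.2)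
      (μx.prod μx) := hF.indicator hm2
  have hfun : (fun p : ℝ × ℝ => g p.1 * h p.2)
      = fun p => ({p : ℝ × ℝ | p.2 ≤ p.1}.indicator fun p => g p.1 * h p.2) p
          + ({p : ℝ × ℝ | p.1 < p.2}.indicator fun p => g p.1 * h p.2) p := by
    funext p
    by_cases hle : p.2 ≤ p.1
    · simp [Set.indicator_apply, Set.mem_setOf_eq, hle, not_lt.mpr hle]
    · simp [Set.indicator_apply, Set.mem_setOf_eq, hle, lt_of_not_ge hle]
  have e0 : (∫ p : ℝ × ℝ, g p.1 * h p.2 ∂(μx.prod μx))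
      = (∫ s, g s ∂μx) * ∫ t, h t ∂μx := integral_prod_mul g h
  have esplit : (∫ p : ℝ × ℝ, g p.1 * h p.2 ∂(μx.prod μx))
      = (∫ p : ℝ × ℝ, ({p : ℝ × ℝ | p.2 ≤ p.1}.indicator fun p => g p.1 * h p.2) p ∂(μx.prod μx))
        + ∫ p : ℝ × ℝ, ({p : ℝ × ℝ | p.1 < p.2}.indicator fun p => g p.1 * h p.2) p
            ∂(μx.prod μx) := by
    rw [← integral_add hF1 hF2]
    exact integral_congr_ae (Filter.Eventually.of_forall fun p => congrFun hfun p)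
  have e1 : (∫ p : ℝ × ℝ, ({p : ℝ × ℝ | p.2 ≤ p.1}.indicator fun p => g p.1 * h p.2) p
      ∂(μx.prod μx)) = ∫ s in Ioc (0:ℝ) x, g s * ∫ t in Ioc (0:ℝ) s, h t := by
    rw [integral_prod _ hF1, hμx]
    refine setIntegral_congr_fun measurableSet_Ioc fun s hs => ?_
    have hind : (fun t => ({p : ℝ × ℝ | p.2 ≤ p.1}.indicator fun p => g p.1 * h p.2) (s, t))
        = (Iic s).indicator fun t => g s * h t := by
      funext t
      by_cases hts : t ≤ s <;>
        simp [Set.indicator_apply, Set.mem_setOf_eq, Set.mem_Iic, hts]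
    rw [hind, integral_indicator measurableSet_Iic,
      Measure.restrict_restrict measurableSet_Iic]
    have hset : Iic s ∩ Ioc 0 x = Ioc (0:ℝ) s := by
      ext t
      simp only [mem_inter_iff, mem_Iic, mem_Ioc]
      exact ⟨fun ⟨h1, h2, h3⟩ => ⟨h2, h1⟩, fun ⟨h1, h2⟩ => ⟨h2, h1, h2.trans hs.2⟩⟩
    rw [hset, integral_const_mul]
  have e2 : (∫ p : ℝ × ℝ, ({p : ℝ × ℝ | p.1 < p.2}.indicator fun p => g p.1 * h p.2) p
      ∂(μx.prod μx)) = ∫ t in Ioc (0:ℝ) x, (∫ s in Ioc (0:ℝ) t, g s) * h t := by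
    rw [integral_prod_symm _ hF2, hμx]
    refine setIntegral_congr_fun measurableSet_Ioc fun t ht => ?_
    have hind : (fun s => ({p : ℝ × ℝ | p.1 < p.2}.indicator fun p => g p.1 * h p.2) (s, t))
        = (Iio t).indicator fun s => g s * h t := by
      funext s
      by_cases hst : s < t <;>
        simp [Set.indicator_apply, Set.mem_setOf_eq, Set.mem_Iio, hst]
    rw [hind, integral_indicator measurableSet_Iio,
      Measure.restrict_restrict measurableSet_Iio]
    have hset : Iio t ∩ Ioc 0 x = Ioo (0:ℝ) t := by
      ext s
      simp only [mem_inter_iff, mem_Iio, mem_Ioc, mem_Ioo]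
      exact ⟨fun ⟨h1, h2, h3⟩ => ⟨h2, h1⟩, fun ⟨h1, h2⟩ => ⟨h2, h1, h2.le.trans ht.2⟩⟩
    rw [hset, integral_mul_const, ← integral_Ioc_eq_integral_Ioo]
  calc (∫ s in Ioc (0:ℝ) x, g s) * (∫ t in Ioc (0:ℝ) x, h t)
      = (∫ s, g s ∂μx) * ∫ t, h t ∂μx := by rw [hμx]
    _ = _ := by rw [← e0, esplit, e1, e2]

lemma alg_aux (c₀ ε k A gvs u b : ℝ) (hc₀ : 0 < c₀) (hε : 0 < ε) (hk : 0 < k)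
    (hA : 0 ≤ A) (hgvs : 0 ≤ gvs) (hu : 0 ≤ u) (hb : 0 ≤ b)
    (hA2 : A ^ 2 ≤ 2 * u ^ 3 * b) :
    k / 2 * A * gvs ≤ ε * c₀ * gvs ^ 2 * u ^ 2 + k ^ 4 / c₀ ^ 3 / ε ^ 2 * u ^ 2 + c₀ * b ^ 2 := by
  set β := k ^ 2 / (c₀ * ε) with hβdef
  have hβ : 0 < β := by positivity
  have hβk : β * (c₀ * ε) = k ^ 2 := by rw [hβdef]; field_simp
  have hγ : k ^ 4 / c₀ ^ 3 / ε ^ 2 * c₀ = β ^ 2 := by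
    rw [hβdef]; field_simp
  set t1 := ε * c₀ * gvs ^ 2 * u ^ 2 with ht1
  set c := k ^ 4 / c₀ ^ 3 / ε ^ 2 * u ^ 2 + c₀ * b ^ 2 with hc
  have ht1n : 0 ≤ t1 := by positivity
  have hcn : 0 ≤ c := by positivity
  have hcb : 2 * β * u * b ≤ c := by
    have hs := sq_nonneg (β * u - c₀ * b)
    have h1 : c₀ * c = (k ^ 4 / c₀ ^ 3 / ε ^ 2 * c₀) * u ^ 2 + c₀ ^ 2 * b ^ 2 := by
      rw [hc]; ring
    rw [hγ] at h1
    nlinarith [hs, hc₀]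
  clear_value β t1 c
  have hL2 : (k / 2 * A * gvs) ^ 2 ≤ (t1 + c) ^ 2 := by
    have h1 : (k / 2 * A * gvs) ^ 2 ≤ k ^ 2 / 2 * (gvs ^ 2 * (u ^ 3 * b)) := by
      nlinarith [mul_le_mul_of_nonneg_left hA2 (by positivity : (0:ℝ) ≤ k ^ 2 * gvs ^ 2 / 4)]
    have h2 : 2 * t1 * (2 * β * u * b) = 4 * (k ^ 2 * (gvs ^ 2 * (u ^ 3 * b))) := by
      rw [ht1]; linear_combination (4 * gvs ^ 2 * u ^ 3 * b) * hβk
    have h3 : 2 * t1 * (2 * β * u * b) ≤ 2 * (t1 * c) := by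
      have h4 := mul_le_mul_of_nonneg_left hcb ht1n
      linarith [h4]
    have hXn : 0 ≤ k ^ 2 * (gvs ^ 2 * (u ^ 3 * b)) :=
      mul_nonneg (sq_nonneg k) (by positivity)
    have hexp : (t1 + c) ^ 2 = t1 ^ 2 + 2 * (t1 * c) + c ^ 2 := by ring
    have hk2X : k ^ 2 / 2 * (gvs ^ 2 * (u ^ 3 * b)) ≤ 4 * (k ^ 2 * (gvs ^ 2 * (u ^ 3 * b))) := by
      linarith [hXn]
    linarith [h1, h2, h3, hexp, hk2X, sq_nonneg t1, sq_nonneg c]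
  have hfin := le_of_pow_le_pow_left₀ two_ne_zero (by positivity : (0:ℝ) ≤ t1 + c) hL2
  linarith [hfin]

lemma cs_aux {μ : Measure ℝ} (f g : ℝ → ℝ) (hf : MemLp f 2 μ) (hg : MemLp g 2 μ) :
    ∫ a, |f a * g a| ∂μ
      ≤ Real.sqrt (∫ a, f a ^ 2 ∂μ) * Real.sqrt (∫ a, g a ^ 2 ∂μ) := by
  have hpq : Real.HolderConjugate 2 2 := Real.holderConjugate_iff.mpr ⟨one_lt_two, by norm_num⟩
  have h2 : ENNReal.ofReal (2:ℝ) = 2 := by norm_num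
  have hf' : MemLp f (ENNReal.ofReal (2:ℝ)) μ := by rwa [h2]
  have hg' : MemLp g (ENNReal.ofReal (2:ℝ)) μ := by rwa [h2]
  have h := integral_mul_norm_le_Lp_mul_Lq hpq hf' hg'
  have e1 : ∀ (φ : ℝ → ℝ), (∫ a, ‖φ a‖ ^ (2:ℝ) ∂μ) = ∫ a, φ a ^ 2 ∂μ := by
    intro φ
    refine integral_congr_ae (Filter.Eventually.of_forall fun a => ?_)
    show ‖φ a‖ ^ (2:ℝ) = φ a ^ 2
    rw [show ((2:ℝ)) = ((2:ℕ):ℝ) by norm_num, Real.rpow_natCast, Real.norm_eq_abs, sq_abs]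
  calc ∫ a, |f a * g a| ∂μ = ∫ a, ‖f a‖ * ‖g a‖ ∂μ := by
        refine integral_congr_ae (Filter.Eventually.of_forall fun a => ?_)
        show |f a * g a| = ‖f a‖ * ‖g a‖
        rw [Real.norm_eq_abs, Real.norm_eq_abs, abs_mul]
    _ ≤ (∫ a, ‖f a‖ ^ (2:ℝ) ∂μ) ^ ((1:ℝ)/2) * (∫ a, ‖g a‖ ^ (2:ℝ) ∂μ) ^ ((1:ℝ)/2) := h
    _ = _ := by rw [e1 f, e1 g, ← Real.sqrt_eq_rpow, ← Real.sqrt_eq_rpow]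

end helpers

set_option maxHeartbeats 1000000 in
/-- Monotonicity-type estimate for the derivative of the Burgers nonlinearity
`F(u) = c₁ u ∂u`: there is `C > 0` such that for all `ε > 0` and all
`v, w ∈ W₀^{1,2}((0,1),ℝ)` with weak derivatives `g_v, g_w` one has
`c₁ ∫ (w g_v + v g_w) w ≤ ε c₀ ‖g_v‖² ‖w‖² + (C/ε²) ‖w‖² + c₀ ‖g_w‖²` (squared `L²`-norms). -/
theorem stmt12 (c₀ c₁ : ℝ) (hc₀ : 0 < c₀) :
    ∃ C : ℝ, 0 < C ∧ ∀ ε : ℝ, 0 < ε → ∀ v w gv gw : ℝ → ℝ,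
      MemLp gv 2 (volume.restrict (Set.Ioo (0 : ℝ) 1)) →
      MemLp gw 2 (volume.restrict (Set.Ioo (0 : ℝ) 1)) →
      (∀ x ∈ Set.Icc (0 : ℝ) 1, v x = ∫ t in (0 : ℝ)..x, gv t) → v 1 = 0 →
      (∀ x ∈ Set.Icc (0 : ℝ) 1, w x = ∫ t in (0 : ℝ)..x, gw t) → w 1 = 0 →
      c₁ * (∫ x in Set.Ioo (0 : ℝ) 1, (w x * gv x + v x * gw x) * w x)
        ≤ ε * c₀ * (∫ x in Set.Ioo (0 : ℝ) 1, gv x ^ 2) * (∫ x in Set.Ioo (0 : ℝ) 1, w x ^ 2)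
          + C / ε ^ 2 * (∫ x in Set.Ioo (0 : ℝ) 1, w x ^ 2)
          + c₀ * (∫ x in Set.Ioo (0 : ℝ) 1, gw x ^ 2) := by
  refine ⟨(|c₁| + 1) ^ 4 / c₀ ^ 3, by positivity, ?_⟩
  intro ε hε v w gv gw hgv2 hgw2 hv hv1 hw hw1
  set k := |c₁| + 1 with hk
  have hkpos : (0:ℝ) < k := by positivity
  haveI hfin : IsFiniteMeasure (volume.restrict (Ioo (0:ℝ) 1)) := by
    constructor
    rw [Measure.restrict_apply_univ, Real.volume_Ioo]
    exact ENNReal.ofReal_lt_top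
  have igv : Integrable gv (volume.restrict (Ioo (0:ℝ) 1)) := hgv2.integrable one_le_two
  have igw : Integrable gw (volume.restrict (Ioo (0:ℝ) 1)) := hgw2.integrable one_le_two
  set gv' : ℝ → ℝ := (Ioo (0:ℝ) 1).indicator gv with hgv'def
  set gw' : ℝ → ℝ := (Ioo (0:ℝ) 1).indicator gw with hgw'def
  have igv' : Integrable gv' volume := by
    rw [hgv'def, integrable_indicator_iff measurableSet_Ioo]; exact igv
  have igw' : Integrable gw' volume := by
    rw [hgw'def, integrable_indicator_iff measurableSet_Ioo]; exact igw
  set V : ℝ → ℝ := fun y => ∫ t in (0:ℝ)..y, gv' t with hVdef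
  set W : ℝ → ℝ := fun y => ∫ t in (0:ℝ)..y, gw' t with hWdef
  have hVc : Continuous V :=
    intervalIntegral.continuous_primitive (fun a b => igv'.intervalIntegrable) 0
  have hWc : Continuous W :=
    intervalIntegral.continuous_primitive (fun a b => igw'.intervalIntegrable) 0
  -- global bounds
  set Bv : ℝ := ∫ t, ‖gv' t‖ with hBv
  set Bw : ℝ := ∫ t, ‖gw' t‖ with hBw
  have hVbd : ∀ y, ‖V y‖ ≤ Bv := by
    intro y
    refine le_trans intervalIntegral.norm_integral_le_integral_norm_uIoc ?_
    exact setIntegral_le_integral igv'.norm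
      (Filter.Eventually.of_forall fun t => norm_nonneg _)
  have hWbd : ∀ y, ‖W y‖ ≤ Bw := by
    intro y
    refine le_trans intervalIntegral.norm_integral_le_integral_norm_uIoc ?_
    exact setIntegral_le_integral igw'.norm
      (Filter.Eventually.of_forall fun t => norm_nonneg _)
  -- identification with v, w on [0,1]
  have hprim : ∀ (g : ℝ → ℝ), ∀ y ∈ Icc (0:ℝ) 1,
      (∫ t in (0:ℝ)..y, g t) = ∫ t in Ioo (0:ℝ) y, (Ioo (0:ℝ) 1).indicator g t := by
    intro g y hy
    rw [intervalIntegral.integral_of_le hy.1, integral_Ioc_eq_integral_Ioo]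
    refine setIntegral_congr_fun measurableSet_Ioo fun t ht => ?_
    exact (Set.indicator_of_mem (show t ∈ Ioo (0:ℝ) 1 from ⟨ht.1, lt_of_lt_of_le ht.2 hy.2⟩) g).symm
  have hvV : ∀ y ∈ Icc (0:ℝ) 1, v y = V y := by
    intro y hy
    rw [hv y hy, hprim gv y hy, hVdef]
    simp only
    rw [intervalIntegral.integral_of_le hy.1, integral_Ioc_eq_integral_Ioo, ← hgv'def]
  have hwW : ∀ y ∈ Icc (0:ℝ) 1, w y = W y := by
    intro y hy
    rw [hw y hy, hprim gw y hy, hWdef]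
    simp only
    rw [intervalIntegral.integral_of_le hy.1, integral_Ioc_eq_integral_Ioo, ← hgw'def]
  -- rewrite the goal in terms of V, W
  have hg1 : (∫ x in Ioo (0:ℝ) 1, (w x * gv x + v x * gw x) * w x)
      = ∫ x in Ioo (0:ℝ) 1, (W x * gv x + V x * gw x) * W x := by
    refine setIntegral_congr_fun measurableSet_Ioo fun x hx => ?_
    rw [hwW x (Ioo_subset_Icc_self hx), hvV x (Ioo_subset_Icc_self hx)]
  have hg2 : (∫ x in Ioo (0:ℝ) 1, w x ^ 2) = ∫ x in Ioo (0:ℝ) 1, W x ^ 2 := by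
    refine setIntegral_congr_fun measurableSet_Ioo fun x hx => ?_
    rw [hwW x (Ioo_subset_Icc_self hx)]
  rw [hg1, hg2]
  set GV := ∫ x in Ioo (0:ℝ) 1, gv x ^ 2 with hGV
  set GW := ∫ x in Ioo (0:ℝ) 1, gw x ^ 2 with hGW
  set WW := ∫ x in Ioo (0:ℝ) 1, W x ^ 2 with hWW
  have hGVnn : 0 ≤ GV := integral_nonneg fun x => sq_nonneg _
  have hGWnn : 0 ≤ GW := integral_nonneg fun x => sq_nonneg _
  have hWWnn : 0 ≤ WW := integral_nonneg fun x => sq_nonneg _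
  -- Agmon-type identity
  have hWs : ∀ s : ℝ, 0 ≤ s → W s = ∫ t in Ioc (0:ℝ) s, gw' t := by
    intro s hs
    rw [hWdef]; simp only
    exact intervalIntegral.integral_of_le hs
  have hVs : ∀ s : ℝ, 0 ≤ s → V s = ∫ t in Ioc (0:ℝ) s, gv' t := by
    intro s hs
    rw [hVdef]; simp only
    exact intervalIntegral.integral_of_le hs
  have hWsq : ∀ y ∈ Icc (0:ℝ) 1, W y ^ 2 = 2 * ∫ s in Ioc (0:ℝ) y, W s * gw' s := by
    intro y hy
    have h1 := ibp_aux gw' gw' y igw'.integrableOn igw'.integrableOn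
    have e1 : (∫ s in Ioc (0:ℝ) y, gw' s * ∫ t in Ioc (0:ℝ) s, gw' t)
        = ∫ s in Ioc (0:ℝ) y, W s * gw' s := by
      refine setIntegral_congr_fun measurableSet_Ioc fun s hs => ?_
      rw [← hWs s hs.1.le, mul_comm]
    have e2 : (∫ t in Ioc (0:ℝ) y, (∫ s in Ioc (0:ℝ) t, gw' s) * gw' t)
        = ∫ s in Ioc (0:ℝ) y, W s * gw' s := by
      refine setIntegral_congr_fun measurableSet_Ioc fun s hs => ?_
      rw [← hWs s hs.1.le]
    rw [pow_two, hWs y hy.1, h1, e1, e2]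
    ring
  -- main integration-by-parts identity
  set J := ∫ x in Ioo (0:ℝ) 1, W x ^ 2 * gv x with hJ
  set K := ∫ x in Ioo (0:ℝ) 1, V x * (W x * gw x) with hK
  have ihWgw : Integrable (fun x => W x * gw x) (volume.restrict (Ioo (0:ℝ) 1)) :=
    igw.bdd_mul hWc.aestronglyMeasurable (Filter.Eventually.of_forall hWbd)
  have iW2gv : Integrable (fun x => W x ^ 2 * gv x) (volume.restrict (Ioo (0:ℝ) 1)) := by
    refine igv.bdd_mul (c := Bw ^ 2) ((hWc.pow 2).aestronglyMeasurable) (Filter.Eventually.of_forall fun y => ?_)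
    have h := hWbd y
    rw [Real.norm_eq_abs] at h ⊢
    rw [abs_pow]
    nlinarith [abs_nonneg (W y)]
  have iVWgw : Integrable (fun x => V x * (W x * gw x)) (volume.restrict (Ioo (0:ℝ) 1)) :=
    ihWgw.bdd_mul hVc.aestronglyMeasurable (Filter.Eventually.of_forall hVbd)
  have hmainJK : J + 2 * K = 0 := by
    have hhint : IntegrableOn (fun s => 2 * (W s * gw' s)) (Ioc (0:ℝ) 1) volume := by
      have h0 : Integrable (fun s => W s * gw' s) volume :=
        igw'.bdd_mul hWc.aestronglyMeasurable (Filter.Eventually.of_forall hWbd)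
      exact (h0.const_mul 2).integrableOn
    have h1 := ibp_aux gv' (fun s => 2 * (W s * gw' s)) 1 igv'.integrableOn hhint
    have hV1 : (∫ s in Ioc (0:ℝ) 1, gv' s) = 0 := by
      rw [← hVs 1 zero_le_one, ← hvV 1 ⟨zero_le_one, le_refl 1⟩, hv1]
    have e1 : (∫ s in Ioc (0:ℝ) 1, gv' s * ∫ t in Ioc (0:ℝ) s, 2 * (W t * gw' t))
        = ∫ s in Ioc (0:ℝ) 1, gv' s * W s ^ 2 := by
      refine setIntegral_congr_fun measurableSet_Ioc fun s hs => ?_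
      rw [integral_const_mul, ← hWsq s ⟨hs.1.le, hs.2⟩]
    have e2 : (∫ t in Ioc (0:ℝ) 1, (∫ s in Ioc (0:ℝ) t, gv' s) * (2 * (W t * gw' t)))
        = ∫ t in Ioc (0:ℝ) 1, V t * (2 * (W t * gw' t)) := by
      refine setIntegral_congr_fun measurableSet_Ioc fun t ht => ?_
      rw [← hVs t ht.1.le]
    rw [hV1, zero_mul, e1, e2] at h1
    -- transfer from Ioc to Ioo and primed to unprimed
    have f1 : (∫ s in Ioc (0:ℝ) 1, gv' s * W s ^ 2) = J := by
      rw [integral_Ioc_eq_integral_Ioo, hJ]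
      refine setIntegral_congr_fun measurableSet_Ioo fun s hs => ?_
      rw [hgv'def, Set.indicator_of_mem hs, mul_comm]
    have f2 : (∫ t in Ioc (0:ℝ) 1, V t * (2 * (W t * gw' t))) = 2 * K := by
      rw [integral_Ioc_eq_integral_Ioo]
      have : (∫ t in Ioo (0:ℝ) 1, V t * (2 * (W t * gw' t)))
          = ∫ t in Ioo (0:ℝ) 1, 2 * (V t * (W t * gw t)) := by
        refine setIntegral_congr_fun measurableSet_Ioo fun t ht => ?_
        rw [hgw'def, Set.indicator_of_mem ht]
        ring
      rw [this, integral_const_mul, hK]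
    rw [f1, f2] at h1
    linarith [h1]
  -- split the main integral
  have hIhalf : (∫ x in Ioo (0:ℝ) 1, (W x * gv x + V x * gw x) * W x) = 1 / 2 * J := by
    have hptw : ∀ x, (W x * gv x + V x * gw x) * W x
        = W x ^ 2 * gv x + V x * (W x * gw x) := fun x => by ring
    have e := integral_congr_ae (μ := volume.restrict (Ioo (0:ℝ) 1))
      (Filter.Eventually.of_forall hptw)
    rw [e, integral_add iW2gv iVWgw, ← hJ, ← hK]
    linarith [hmainJK]
  rw [hIhalf]
  -- MemLp facts
  have hWmem : MemLp W 2 (volume.restrict (Ioo (0:ℝ) 1)) :=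
    MemLp.of_bound hWc.aestronglyMeasurable Bw (Filter.Eventually.of_forall hWbd)
  have hW2mem : MemLp (fun x => W x ^ 2) 2 (volume.restrict (Ioo (0:ℝ) 1)) := by
    refine MemLp.of_bound ((hWc.pow 2).aestronglyMeasurable) (Bw ^ 2)
      (Filter.Eventually.of_forall fun y => ?_)
    have h := hWbd y
    rw [Real.norm_eq_abs] at h ⊢
    rw [abs_pow]
    nlinarith [abs_nonneg (W y)]
  -- Cauchy-Schwarz
  have cs1 : (∫ x in Ioo (0:ℝ) 1, |W x * gw x|)
      ≤ Real.sqrt WW * Real.sqrt GW := by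
    have h := cs_aux W gw hWmem hgw2
    rw [← hWW, ← hGW] at h
    exact h
  set A := Real.sqrt (∫ x in Ioo (0:ℝ) 1, (W x ^ 2) ^ 2) with hA
  have hAnn : 0 ≤ A := Real.sqrt_nonneg _
  have csJ : |J| ≤ A * Real.sqrt GV := by
    have h1 : |J| ≤ ∫ x in Ioo (0:ℝ) 1, |W x ^ 2 * gv x| := by
      rw [hJ]
      calc |∫ x in Ioo (0:ℝ) 1, W x ^ 2 * gv x|
          = ‖∫ x in Ioo (0:ℝ) 1, W x ^ 2 * gv x‖ := (Real.norm_eq_abs _).symm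
        _ ≤ ∫ x in Ioo (0:ℝ) 1, ‖W x ^ 2 * gv x‖ := norm_integral_le_integral_norm _
        _ = ∫ x in Ioo (0:ℝ) 1, |W x ^ 2 * gv x| := by
            refine setIntegral_congr_fun measurableSet_Ioo fun x hx => ?_
            rw [Real.norm_eq_abs]
    have h2 := cs_aux (fun x => W x ^ 2) gv hW2mem hgv2
    rw [← hGV] at h2
    exact h1.trans (h2.trans (by rw [hA]))
  -- Agmon sup bound
  set M := 2 * ∫ s in Ioo (0:ℝ) 1, |W s * gw s| with hM
  have hsup : ∀ x ∈ Ioo (0:ℝ) 1, W x ^ 2 ≤ M := by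
    intro x hx
    rw [hWsq x ⟨hx.1.le, hx.2.le⟩, hM]
    have step1 : (∫ s in Ioc (0:ℝ) x, W s * gw' s)
        ≤ ∫ s in Ioc (0:ℝ) x, |W s * gw s| := by
      have ha : (∫ s in Ioc (0:ℝ) x, W s * gw' s)
          ≤ |∫ s in Ioc (0:ℝ) x, W s * gw' s| := le_abs_self _
      have hb : |∫ s in Ioc (0:ℝ) x, W s * gw' s|
          ≤ ∫ s in Ioc (0:ℝ) x, |W s * gw' s| := by
        rw [← Real.norm_eq_abs]
        refine (norm_integral_le_integral_norm _).trans (le_of_eq ?_)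
        refine setIntegral_congr_fun measurableSet_Ioc fun s hs => Real.norm_eq_abs _
      have hc : (∫ s in Ioc (0:ℝ) x, |W s * gw' s|)
          = ∫ s in Ioc (0:ℝ) x, |W s * gw s| := by
        refine setIntegral_congr_fun measurableSet_Ioc fun s hs => ?_
        rw [hgw'def, Set.indicator_of_mem (show s ∈ Ioo (0:ℝ) 1 from ⟨hs.1, lt_of_le_of_lt hs.2 hx.2⟩)]
      linarith [ha, hb, hc.le, hc.ge]
    have step2 : (∫ s in Ioc (0:ℝ) x, |W s * gw s|)
        ≤ ∫ s in Ioo (0:ℝ) 1, |W s * gw s| := by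
      refine setIntegral_mono_set ihWgw.abs
        (Filter.Eventually.of_forall fun s => abs_nonneg _) ?_
      exact HasSubset.Subset.eventuallyLE fun s hs => ⟨hs.1, lt_of_le_of_lt hs.2 hx.2⟩
    linarith [step1, step2]
  have hMnn : 0 ≤ M := by
    rw [hM]
    have : 0 ≤ ∫ s in Ioo (0:ℝ) 1, |W s * gw s| :=
      integral_nonneg fun s => abs_nonneg _
    linarith
  -- integral of W⁴
  have h4 : (∫ x in Ioo (0:ℝ) 1, (W x ^ 2) ^ 2) ≤ M * WW := by
    have iW4 : IntegrableOn (fun x => (W x ^ 2) ^ 2) (Ioo (0:ℝ) 1) volume :=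
      (((hWc.pow 2).pow 2).integrableOn_Icc (a := 0) (b := 1)).mono_set Ioo_subset_Icc_self
    have iMW2 : IntegrableOn (fun x => M * W x ^ 2) (Ioo (0:ℝ) 1) volume :=
      ((continuous_const.mul (hWc.pow 2)).integrableOn_Icc (a := 0) (b := 1)).mono_set
        Ioo_subset_Icc_self
    have hmono := setIntegral_mono_on iW4 iMW2 measurableSet_Ioo
      (fun x hx => by nlinarith [hsup x hx, sq_nonneg (W x)])
    calc (∫ x in Ioo (0:ℝ) 1, (W x ^ 2) ^ 2)
        ≤ ∫ x in Ioo (0:ℝ) 1, M * W x ^ 2 := hmono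
      _ = M * WW := by rw [integral_const_mul, ← hWW]
  -- assemble
  set u := Real.sqrt WW with hu
  set b := Real.sqrt GW with hb
  set gvs := Real.sqrt GV with hgvs
  have hun : 0 ≤ u := Real.sqrt_nonneg _
  have hbn : 0 ≤ b := Real.sqrt_nonneg _
  have hgvsn : 0 ≤ gvs := Real.sqrt_nonneg _
  have hu2 : u ^ 2 = WW := Real.sq_sqrt hWWnn
  have hb2 : b ^ 2 = GW := Real.sq_sqrt hGWnn
  have hgvs2 : gvs ^ 2 = GV := Real.sq_sqrt hGVnn
  have hA2' : A ^ 2 = ∫ x in Ioo (0:ℝ) 1, (W x ^ 2) ^ 2 := by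
    rw [hA]; exact Real.sq_sqrt (integral_nonneg fun x => sq_nonneg _)
  have hA2 : A ^ 2 ≤ 2 * u ^ 3 * b := by
    rw [hA2']
    have hMub : M ≤ 2 * (u * b) := by rw [hM]; linarith [cs1]
    have : M * WW ≤ 2 * (u * b) * WW := mul_le_mul_of_nonneg_right hMub hWWnn
    have hWWu : WW = u ^ 2 := hu2.symm
    nlinarith [h4, this]
  clear_value k A u b gvs J K M GV GW WW
  have hstep : c₁ * (1 / 2 * J) ≤ k / 2 * A * gvs := by
    have hkc : |c₁| ≤ k := by rw [hk]; linarith [abs_nonneg c₁]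
    have e1 : |c₁| * |J| ≤ k * |J| := mul_le_mul_of_nonneg_right hkc (abs_nonneg J)
    have e2 : k * |J| ≤ k * (A * gvs) := mul_le_mul_of_nonneg_left csJ hkpos.le
    have e3 : c₁ * J ≤ |c₁| * |J| := by
      rw [← abs_mul]; exact le_abs_self _
    linarith [e1, e2, e3]
  have halg := alg_aux c₀ ε k A gvs u b hc₀ hε hkpos hAnn hgvsn hun hbn hA2
  rw [hu2, hb2, hgvs2] at halg
  linarith [hstep, halg]
end

section
/- Let c_0 ∈ (0,∞), c_1 ∈ ℝ, α ∈ (3/4,∞), and let v ∈ W_0^{1,2}((0,1),ℝ) with weak derivative g ∈ L²((0,1),ℝ). Then ∑_{n=1}^∞ (c_0π²n²)^{−2α}·(∫_0^1 √2·sin(nπx)·c_1·v(x)·g(x) dx)² ≤ c_1²·c_0^{−2α}·(½·∑_{n=1}^∞ (πn)^{2−4α})·‖v‖_{L²((0,1))}⁴, and the right-hand side is finite. -/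
open MeasureTheory

open Set in
lemma sym_aux {f : ℝ → ℝ} {a b : ℝ} (hf : IntegrableOn f (Set.Ioo a b)) :
    Integrable (fun x => f x * ∫ t in Set.Ioo a x, f t) (volume.restrict (Set.Ioo a b)) ∧
    (∫ x in Set.Ioo a b, f x * ∫ t in Set.Ioo a x, f t) = (∫ x in Set.Ioo a b, f x) ^ 2 / 2 := by
  set μ := volume.restrict (Set.Ioo a b) with hμ
  set F : ℝ × ℝ → ℝ := ({p : ℝ × ℝ | p.2 < p.1}).indicator (fun p => f p.1 * f p.2) with hF
  have hsm : MeasurableSet {p : ℝ × ℝ | p.2 < p.1} := measurableSet_lt measurable_snd measurable_fst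
  have hFint : Integrable F (μ.prod μ) := (hf.mul_prod hf).indicator hsm
  -- marginal in t
  have hmarg1 : ∀ x ∈ Set.Ioo a b,
      (∫ t, F (x, t) ∂μ) = f x * ∫ t in Set.Ioo a x, f t := by
    intro x hx
    have h1 : (fun t => F (x, t)) = (Set.Iio x).indicator (fun t => f x * f t) := by
      ext t
      by_cases h : t < x <;> simp [hF, Set.indicator_apply, h]
    rw [h1, integral_indicator measurableSet_Iio, hμ,
      Measure.restrict_restrict measurableSet_Iio]
    have h2 : Set.Iio x ∩ Set.Ioo a b = Set.Ioo a x := by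
      ext t
      constructor
      · rintro ⟨h3, h4, h5⟩; exact ⟨h4, h3⟩
      · rintro ⟨h3, h4⟩; exact ⟨h4, h3, h4.trans hx.2⟩
    rw [h2, integral_const_mul]
  have hmarg2 : ∀ t ∈ Set.Ioo a b,
      (∫ x, F (x, t) ∂μ) = (∫ x in Set.Ioo t b, f x) * f t := by
    intro t ht
    have h1 : (fun x => F (x, t)) = (Set.Ioi t).indicator (fun x => f x * f t) := by
      ext x
      by_cases h : t < x <;> simp [hF, Set.indicator_apply, h]
    rw [h1, integral_indicator measurableSet_Ioi, hμ,
      Measure.restrict_restrict measurableSet_Ioi]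
    have h2 : Set.Ioi t ∩ Set.Ioo a b = Set.Ioo t b := by
      ext x
      constructor
      · rintro ⟨h3, h4, h5⟩; exact ⟨h3, h5⟩
      · rintro ⟨h3, h4⟩; exact ⟨h3, ht.1.trans h3, h4⟩
    rw [h2, integral_mul_const]
  have hae1 : (fun x => ∫ t, F (x, t) ∂μ) =ᵐ[μ] fun x => f x * ∫ t in Set.Ioo a x, f t := by
    rw [hμ]
    filter_upwards [ae_restrict_mem measurableSet_Ioo] with x hx
    exact hmarg1 x hx
  have hint1 : Integrable (fun x => f x * ∫ t in Set.Ioo a x, f t) μ :=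
    (hFint.integral_prod_left).congr hae1
  refine ⟨hint1, ?_⟩
  -- Fubini
  have hswap : (∫ x, ∫ t, F (x, t) ∂μ ∂μ) = ∫ t, ∫ x, F (x, t) ∂μ ∂μ :=
    integral_integral_swap hFint
  have hD1 : (∫ x, ∫ t, F (x, t) ∂μ ∂μ) = ∫ x in Set.Ioo a b, f x * ∫ t in Set.Ioo a x, f t :=
    integral_congr_ae hae1
  have hae2 : (fun t => ∫ x, F (x, t) ∂μ) =ᵐ[μ] fun t => (∫ x in Set.Ioo t b, f x) * f t := by
    rw [hμ]
    filter_upwards [ae_restrict_mem measurableSet_Ioo] with t ht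
    exact hmarg2 t ht
  have hD2 : (∫ t, ∫ x, F (x, t) ∂μ ∂μ) = ∫ t in Set.Ioo a b, (∫ x in Set.Ioo t b, f x) * f t :=
    integral_congr_ae hae2
  -- split : ∫_{Ioo t b} f = S - ∫_{Ioo a t} f
  have hadd : ∀ t ∈ Set.Ioo a b,
      (∫ x in Set.Ioo t b, f x) = (∫ x in Set.Ioo a b, f x) - ∫ x in Set.Ioo a t, f x := by
    intro t ht
    have hdisj : Disjoint (Set.Ioo a t) (Set.Ico t b) := by
      rw [Set.disjoint_left]
      rintro x ⟨_, h1⟩ ⟨h2, _⟩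
      exact absurd h2 (not_le.2 h1)
    have hun : Set.Ioo a t ∪ Set.Ico t b = Set.Ioo a b := Set.Ioo_union_Ico_eq_Ioo ht.1 ht.2.le
    have := setIntegral_union hdisj measurableSet_Ico
      (hf.mono_set (Set.Ioo_subset_Ioo le_rfl ht.2.le))
      (hf.mono_set (fun x hx => ⟨ht.1.trans_le hx.1, hx.2⟩))
    rw [hun] at this
    rw [this, integral_Ico_eq_integral_Ioo]
    ring
  have hcong2 : (fun t => (∫ x in Set.Ioo t b, f x) * f t) =ᵐ[μ]
      (fun t => (∫ x in Set.Ioo a b, f x) * f t - (f t * ∫ x in Set.Ioo a t, f x)) := by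
    rw [hμ]
    filter_upwards [ae_restrict_mem measurableSet_Ioo] with t ht
    rw [hadd t ht]; ring
  have hD3 : (∫ t in Set.Ioo a b, (∫ x in Set.Ioo t b, f x) * f t)
      = (∫ x in Set.Ioo a b, f x) * (∫ t in Set.Ioo a b, f t)
        - ∫ t in Set.Ioo a b, f t * ∫ x in Set.Ioo a t, f x := by
    rw [integral_congr_ae hcong2, integral_sub (hf.const_mul _) hint1, integral_const_mul]
  have := hD1.symm.trans (hswap.trans (hD2.trans hD3))
  -- this : D = S * S - D
  nlinarith [this]

open Set in
lemma keyJ (v g : ℝ → ℝ)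
    (hgI : IntegrableOn g (Set.Ioc (0:ℝ) 1))
    (hv : ∀ t ∈ Set.Icc (0 : ℝ) 1, v t = ∫ s in (0 : ℝ)..t, g s)
    (hv1 : v 1 = 0) :
    ∀ u ∈ Set.Icc (0:ℝ) 1, (∫ x in Set.Ioo u 1, v x * g x) = -(v u) ^ 2 / 2 := by
  intro u hu
  rcases eq_or_lt_of_le hu.2 with h1 | hu1
  · subst h1
    simp [hv1]
  -- u < 1
  have hgu : IntegrableOn g (Set.Ioo u 1) :=
    hgI.mono_set (fun x hx => ⟨lt_of_le_of_lt hu.1 hx.1, hx.2.le⟩)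
  have hII : ∀ p q : ℝ, 0 ≤ p → p ≤ 1 → 0 ≤ q → q ≤ 1 → IntervalIntegrable g volume p q := by
    intro p q hp hp1 hq hq1
    rcases le_total p q with h | h
    · rw [intervalIntegrable_iff_integrableOn_Ioc_of_le h]
      exact hgI.mono_set (Set.Ioc_subset_Ioc hp hq1)
    · exact ((intervalIntegrable_iff_integrableOn_Ioc_of_le h).2
        (hgI.mono_set (Set.Ioc_subset_Ioc hq hp1))).symm
  have vdiff : ∀ x ∈ Set.Icc (0:ℝ) 1, u ≤ x → v x = v u + ∫ t in Set.Ioo u x, g t := by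
    intro x hx hux
    have h2 : (∫ s in (0:ℝ)..u, g s) + ∫ s in u..x, g s = ∫ s in (0:ℝ)..x, g s :=
      intervalIntegral.integral_add_adjacent_intervals (hII 0 u le_rfl zero_le_one hu.1 hu.2) (hII u x hu.1 hu.2 hx.1 hx.2)
    have h3 : (∫ s in u..x, g s) = ∫ t in Set.Ioo u x, g t := by
      rw [intervalIntegral.integral_of_le hux, integral_Ioc_eq_integral_Ioo]
    rw [hv x hx, hv u hu, ← h2, h3]
  have hS : (∫ x in Set.Ioo u 1, g x) = -(v u) := by
    have := vdiff 1 ⟨zero_le_one, le_rfl⟩ hu1.le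
    rw [hv1] at this
    linarith
  have hcong : (fun x => v x * g x) =ᵐ[volume.restrict (Set.Ioo u 1)]
      (fun x => v u * g x + g x * ∫ t in Set.Ioo u x, g t) := by
    filter_upwards [ae_restrict_mem measurableSet_Ioo] with x hx
    rw [vdiff x ⟨le_trans hu.1 hx.1.le, hx.2.le⟩ hx.1.le]
    ring
  rw [integral_congr_ae hcong, integral_add (hgu.const_mul _) (sym_aux hgu).1,
    integral_const_mul, hS, (sym_aux hgu).2, hS]
  ring

open Set in
lemma sinBound (v g : ℝ → ℝ)
    (hvg : Integrable (fun x => v x * g x) (volume.restrict (Set.Ioo (0:ℝ) 1)))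
    (hv2 : Integrable (fun x => v x ^ 2) (volume.restrict (Set.Ioo (0:ℝ) 1)))
    (hkey : ∀ u ∈ Set.Icc (0:ℝ) 1, (∫ x in Set.Ioo u 1, v x * g x) = -(v u) ^ 2 / 2)
    (c : ℝ) (hc : 0 < c) :
    |∫ x in Set.Ioo (0:ℝ) 1, Real.sin (c * x) * (v x * g x)|
      ≤ c / 2 * ∫ x in Set.Ioo (0:ℝ) 1, v x ^ 2 := by
  set μ := volume.restrict (Set.Ioo (0:ℝ) 1) with hμ
  have hcos : Integrable (fun u => Real.cos (c * u)) μ := by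
    have h1 : IntervalIntegrable (fun u => Real.cos (c * u)) volume 0 1 :=
      (Real.continuous_cos.comp (continuous_const.mul continuous_id)).intervalIntegrable 0 1
    rw [intervalIntegrable_iff_integrableOn_Ioc_of_le zero_le_one] at h1
    exact h1.mono_set Set.Ioo_subset_Ioc_self
  set F : ℝ × ℝ → ℝ :=
    ({p : ℝ × ℝ | p.2 < p.1}).indicator (fun p => (v p.1 * g p.1) * Real.cos (c * p.2)) with hF
  have hsm : MeasurableSet {p : ℝ × ℝ | p.2 < p.1} := measurableSet_lt measurable_snd measurable_fst
  have hFint : Integrable F (μ.prod μ) := (hvg.mul_prod hcos).indicator hsm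
  have hsinval : ∀ x : ℝ, 0 ≤ x →
      (∫ u in Set.Ioo (0:ℝ) x, Real.cos (c * u)) = Real.sin (c * x) / c := by
    intro x hx
    have h1 : (∫ u in (0:ℝ)..x, Real.cos (c * u)) = Real.sin (c * x) / c := by
      have hd : ∀ u : ℝ, HasDerivAt (fun u => Real.sin (c * u) / c) (Real.cos (c * u)) u := by
        intro u
        have h2 : HasDerivAt (fun u : ℝ => Real.sin (c * u)) (Real.cos (c * u) * c) u := by
          have hcm : HasDerivAt (fun u : ℝ => c * u) c u := by
            simpa using (hasDerivAt_id u).const_mul c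
          exact (Real.hasDerivAt_sin (c * u)).comp u hcm
        have h3 := h2.div_const c
        have h4 : Real.cos (c * u) * c / c = Real.cos (c * u) := by
          field_simp
        rwa [h4] at h3
      have h5 := intervalIntegral.integral_eq_sub_of_hasDerivAt (f := fun u => Real.sin (c * u) / c)
        (fun u _ => hd u)
        ((Real.continuous_cos.comp (continuous_const.mul continuous_id)).intervalIntegrable 0 x)
      rw [h5]
      simp
    rw [← integral_Ioc_eq_integral_Ioo, ← intervalIntegral.integral_of_le hx, h1]
  -- marginal in u (second variable)
  have hae1 : (fun x => ∫ u, F (x, u) ∂μ) =ᵐ[μ]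
      fun x => (v x * g x) * (Real.sin (c * x) / c) := by
    rw [hμ]
    filter_upwards [ae_restrict_mem measurableSet_Ioo] with x hx
    have h1 : (fun u => F (x, u)) = (Set.Iio x).indicator
        (fun u => (v x * g x) * Real.cos (c * u)) := by
      ext u
      by_cases h : u < x <;> simp [hF, Set.indicator_apply, h]
    rw [h1, integral_indicator measurableSet_Iio,
      Measure.restrict_restrict measurableSet_Iio]
    have h2 : Set.Iio x ∩ Set.Ioo 0 1 = Set.Ioo 0 x := by
      ext u
      exact ⟨fun ⟨h3, h4, h5⟩ => ⟨h4, h3⟩, fun ⟨h3, h4⟩ => ⟨h4, h3, h4.trans hx.2⟩⟩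
    rw [h2, integral_const_mul, hsinval x hx.1.le]
  -- marginal in x (first variable)
  have hae2 : (fun u => ∫ x, F (x, u) ∂μ) =ᵐ[μ]
      fun u => (-(v u) ^ 2 / 2) * Real.cos (c * u) := by
    rw [hμ]
    filter_upwards [ae_restrict_mem measurableSet_Ioo] with u hu
    have h1 : (fun x => F (x, u)) = (Set.Ioi u).indicator
        (fun x => (v x * g x) * Real.cos (c * u)) := by
      ext x
      by_cases h : u < x <;> simp [hF, Set.indicator_apply, h]
    rw [h1, integral_indicator measurableSet_Ioi,
      Measure.restrict_restrict measurableSet_Ioi]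
    have h2 : Set.Ioi u ∩ Set.Ioo 0 1 = Set.Ioo u 1 := by
      ext x
      exact ⟨fun ⟨h3, h4, h5⟩ => ⟨h3, h5⟩, fun ⟨h3, h4⟩ => ⟨h3, hu.1.trans h3, h4⟩⟩
    rw [h2, integral_mul_const, hkey u ⟨hu.1.le, hu.2.le⟩]
  have hswap : (∫ x, ∫ u, F (x, u) ∂μ ∂μ) = ∫ u, ∫ x, F (x, u) ∂μ ∂μ :=
    integral_integral_swap hFint
  have hD1 : (∫ x, ∫ u, F (x, u) ∂μ ∂μ)
      = ∫ x, (v x * g x) * (Real.sin (c * x) / c) ∂μ := integral_congr_ae hae1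
  have hD2 : (∫ u, ∫ x, F (x, u) ∂μ ∂μ)
      = ∫ u, (-(v u) ^ 2 / 2) * Real.cos (c * u) ∂μ := integral_congr_ae hae2
  have hS : (∫ x, Real.sin (c * x) * (v x * g x) ∂μ)
      = c * ∫ u, (-(v u) ^ 2 / 2) * Real.cos (c * u) ∂μ := by
    rw [← hD2, ← hswap, hD1]
    rw [← integral_const_mul]
    congr 1
    ext x
    field_simp
  rw [hμ] at hS ⊢
  rw [hS, abs_mul, abs_of_pos hc]
  have hint : Integrable (fun u => (-(v u) ^ 2 / 2) * Real.cos (c * u)) μ := by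
    have := (((hv2.neg).div_const 2).bdd_mul (c := 1)
      (hcos.aestronglyMeasurable) ?_ : Integrable (fun u => Real.cos (c*u) * (-(v u)^2/2)) μ)
    · exact this.congr (Filter.Eventually.of_forall fun u => by ring)
    · exact Filter.Eventually.of_forall fun u => by
        simpa [Real.norm_eq_abs] using Real.abs_cos_le_one (c * u)
  have habs : |∫ u in Set.Ioo (0:ℝ) 1, (-(v u) ^ 2 / 2) * Real.cos (c * u)|
      ≤ ∫ u in Set.Ioo (0:ℝ) 1, v u ^ 2 / 2 := by
    have hni := norm_integral_le_integral_norm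
      (f := fun u => (-(v u) ^ 2 / 2) * Real.cos (c * u)) (μ := volume.restrict (Set.Ioo (0:ℝ) 1))
    simp only [Real.norm_eq_abs] at hni
    refine hni.trans ?_
    refine integral_mono (hμ ▸ hint.abs) ((hμ ▸ hv2).div_const 2) fun u => ?_
    rw [abs_mul, abs_div, abs_neg, abs_pow, sq_abs, abs_two]
    calc v u ^ 2 / 2 * |Real.cos (c * u)| ≤ v u ^ 2 / 2 * 1 := by
          apply mul_le_mul_of_nonneg_left (Real.abs_cos_le_one _) (by positivity)
      _ = v u ^ 2 / 2 := by ring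
  calc c * |∫ u in Set.Ioo (0:ℝ) 1, (-(v u) ^ 2 / 2) * Real.cos (c * u)|
      ≤ c * ∫ u in Set.Ioo (0:ℝ) 1, v u ^ 2 / 2 := by
        exact mul_le_mul_of_nonneg_left habs hc.le
    _ = c / 2 * ∫ x in Set.Ioo (0:ℝ) 1, v x ^ 2 := by
        rw [integral_div]; ring

open Set in
/-- Growth estimate in `H_{−α}`, `α > 3/4`, for the Burgers nonlinearity
`F(v) = c₁ · v · ∂v`, expressed through the Fourier sine coefficients:
`∑_n (c₀π²n²)^{−2α} ⟨e_n, F(v)⟩² ≤ c₁² c₀^{−2α} (½ ∑_n (πn)^{2−4α}) ‖v‖_{L²}⁴`,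
the right-hand side being finite. -/
theorem stmt13 (c₀ c₁ : ℝ) (hc₀ : 0 < c₀) (α : ℝ) (hα : 3 / 4 < α)
    (v g : ℝ → ℝ)
    (hg : MemLp g 2 (volume.restrict (Set.Ioo (0 : ℝ) 1)))
    (hv : ∀ t ∈ Set.Icc (0 : ℝ) 1, v t = ∫ s in (0 : ℝ)..t, g s)
    (hv1 : v 1 = 0) :
    Summable (fun n : ℕ+ => (Real.pi * (n : ℝ)) ^ ((2 : ℝ) - 4 * α)) ∧
    Summable (fun n : ℕ+ => (c₀ * Real.pi ^ 2 * (n : ℝ) ^ 2) ^ (-(2 * α)) *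
      (∫ x in (0 : ℝ)..1, Real.sqrt 2 * Real.sin ((n : ℝ) * Real.pi * x) * (c₁ * v x * g x)) ^ 2) ∧
    (∑' n : ℕ+, (c₀ * Real.pi ^ 2 * (n : ℝ) ^ 2) ^ (-(2 * α)) *
        (∫ x in (0 : ℝ)..1, Real.sqrt 2 * Real.sin ((n : ℝ) * Real.pi * x) * (c₁ * v x * g x)) ^ 2)
      ≤ c₁ ^ 2 * c₀ ^ (-(2 * α)) *
          (1 / 2 * ∑' n : ℕ+, (Real.pi * (n : ℝ)) ^ ((2 : ℝ) - 4 * α)) *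
          (∫ x in (0 : ℝ)..1, v x ^ 2) ^ 2 := by
  haveI : IsFiniteMeasure (volume.restrict (Set.Ioo (0:ℝ) 1)) := by
    constructor
    rw [Measure.restrict_apply_univ, Real.volume_Ioo]
    exact ENNReal.ofReal_lt_top
  -- integrability facts
  have hgi : IntegrableOn g (Set.Ioo (0:ℝ) 1) := hg.integrable one_le_two
  have hgI' : IntegrableOn g (Set.Ioc (0:ℝ) 1) := (integrableOn_Ioc_iff_integrableOn_Ioo).mpr hgi
  have hkey := keyJ v g hgI' hv hv1
  -- v is continuous on [0,1]
  have hgIcc : IntegrableOn g (Set.uIcc (0:ℝ) 1) := by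
    rw [Set.uIcc_of_le zero_le_one]
    exact (integrableOn_Icc_iff_integrableOn_Ioo).mpr hgi
  have hPc : ContinuousOn (fun x => ∫ t in (0:ℝ)..x, g t) (Set.uIcc (0:ℝ) 1) :=
    intervalIntegral.continuousOn_primitive_interval hgIcc
  have hvc : ContinuousOn v (Set.Icc (0:ℝ) 1) := by
    rw [← Set.uIcc_of_le (zero_le_one (α := ℝ))]
    exact hPc.congr fun x hx => hv x (by rwa [Set.uIcc_of_le zero_le_one] at hx)
  obtain ⟨M, hM⟩ := isCompact_Icc.exists_bound_of_continuousOn hvc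
  have hM0 : 0 ≤ M := le_trans (norm_nonneg _) (hM 1 ⟨zero_le_one, le_rfl⟩)
  have hvm : AEStronglyMeasurable v (volume.restrict (Set.Ioo (0:ℝ) 1)) :=
    (hvc.mono Set.Ioo_subset_Icc_self).aestronglyMeasurable measurableSet_Ioo
  have hvbd : ∀ᵐ x ∂(volume.restrict (Set.Ioo (0:ℝ) 1)), ‖v x‖ ≤ M := by
    filter_upwards [ae_restrict_mem measurableSet_Ioo] with x hx
    exact hM x (Set.Ioo_subset_Icc_self hx)
  have hvg : Integrable (fun x => v x * g x) (volume.restrict (Set.Ioo (0:ℝ) 1)) :=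
    hgi.bdd_mul hvm hvbd
  have hv2 : Integrable (fun x => v x ^ 2) (volume.restrict (Set.Ioo (0:ℝ) 1)) := by
    refine Integrable.mono' (integrable_const (M ^ 2))
      ((hvm.mul hvm).congr (Filter.Eventually.of_forall fun x => (pow_two (v x)).symm)) ?_
    filter_upwards [hvbd] with x hx
    rw [Real.norm_eq_abs] at hx ⊢
    rw [abs_pow]
    nlinarith [abs_nonneg (v x)]
  set Q : ℝ := ∫ x in Set.Ioo (0:ℝ) 1, v x ^ 2 with hQdef
  have hQ0 : 0 ≤ Q := integral_nonneg fun x => sq_nonneg _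
  have hQeq : (∫ x in (0:ℝ)..1, v x ^ 2) = Q := by
    rw [intervalIntegral.integral_of_le zero_le_one, integral_Ioc_eq_integral_Ioo]
  have hπ := Real.pi_pos
  -- summability of the rpow series
  have h2lt : (2:ℝ) - 4 * α < -1 := by linarith
  have hAnat : Summable (fun m : ℕ => (Real.pi * (m:ℝ)) ^ ((2:ℝ) - 4 * α)) := by
    have h2 : Summable (fun m : ℕ => (m:ℝ) ^ ((2:ℝ) - 4 * α)) :=
      Real.summable_nat_rpow.mpr h2lt
    exact (h2.mul_left (Real.pi ^ ((2:ℝ) - 4 * α))).congr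
      fun m => (Real.mul_rpow Real.pi_pos.le (Nat.cast_nonneg m)).symm
  have hA : Summable (fun n : ℕ+ => (Real.pi * (n : ℝ)) ^ ((2 : ℝ) - 4 * α)) :=
    hAnat.comp_injective PNat.coe_injective
  -- per-term bound
  have hterm : ∀ n : ℕ+,
      (c₀ * Real.pi ^ 2 * (n : ℝ) ^ 2) ^ (-(2 * α)) *
        (∫ x in (0 : ℝ)..1, Real.sqrt 2 * Real.sin ((n : ℝ) * Real.pi * x) * (c₁ * v x * g x)) ^ 2
      ≤ c₁ ^ 2 * c₀ ^ (-(2 * α)) * (1 / 2 * (Real.pi * (n : ℝ)) ^ ((2 : ℝ) - 4 * α)) * Q ^ 2 := by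
    intro n
    have hn0 : (0:ℝ) < (n:ℝ) := by exact_mod_cast n.pos
    set c : ℝ := (n:ℝ) * Real.pi with hcdef
    have hc : 0 < c := mul_pos hn0 hπ
    have hpn : (0:ℝ) < Real.pi * (n:ℝ) := mul_pos hπ hn0
    set S : ℝ := ∫ x in Set.Ioo (0:ℝ) 1, Real.sin (c * x) * (v x * g x) with hSdef
    have hSb : |S| ≤ c / 2 * Q := sinBound v g hvg hv2 hkey c hc
    have hIeq : (∫ x in (0:ℝ)..1,
        Real.sqrt 2 * Real.sin ((n : ℝ) * Real.pi * x) * (c₁ * v x * g x))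
        = (Real.sqrt 2 * c₁) * S := by
      rw [intervalIntegral.integral_of_le zero_le_one, integral_Ioc_eq_integral_Ioo, hSdef,
        ← integral_const_mul]
      refine integral_congr_ae (Filter.Eventually.of_forall fun x => ?_)
      rw [hcdef]
      ring
    have hIsq : ((Real.sqrt 2 * c₁) * S) ^ 2 ≤ c₁ ^ 2 * (Real.pi * (n:ℝ)) ^ 2 * Q ^ 2 / 2 := by
      have hs2 : Real.sqrt 2 ^ 2 = 2 := Real.sq_sqrt (by norm_num)
      have hS2 : S ^ 2 ≤ (c / 2 * Q) ^ 2 := by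
        rw [← sq_abs S]
        exact pow_le_pow_left₀ (abs_nonneg _) hSb 2
      have hcpn : c = Real.pi * (n:ℝ) := by rw [hcdef]; ring
      calc (Real.sqrt 2 * c₁ * S) ^ 2 = 2 * (c₁ ^ 2 * S ^ 2) := by
            rw [mul_pow, mul_pow, hs2]; ring
        _ ≤ 2 * (c₁ ^ 2 * (c / 2 * Q) ^ 2) := by
            have := mul_le_mul_of_nonneg_left hS2 (sq_nonneg c₁)
            linarith
        _ = c₁ ^ 2 * (Real.pi * (n:ℝ)) ^ 2 * Q ^ 2 / 2 := by
            rw [hcpn]; ring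
    have hpos : (0:ℝ) ≤ (c₀ * Real.pi ^ 2 * (n : ℝ) ^ 2) ^ (-(2 * α)) :=
      Real.rpow_nonneg (by positivity) _
    have hkeyeq : (c₀ * Real.pi ^ 2 * (n : ℝ) ^ 2) ^ (-(2 * α)) *
        (c₁ ^ 2 * (Real.pi * (n:ℝ)) ^ 2 * Q ^ 2 / 2)
        = c₁ ^ 2 * c₀ ^ (-(2 * α)) * (1 / 2 * (Real.pi * (n : ℝ)) ^ ((2 : ℝ) - 4 * α)) * Q ^ 2 := by
      have h1 : c₀ * Real.pi ^ 2 * (n:ℝ) ^ 2 = c₀ * (Real.pi * (n:ℝ)) ^ 2 := by ring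
      rw [h1, Real.mul_rpow hc₀.le (sq_nonneg _)]
      have h2 : ((Real.pi * (n:ℝ)) ^ 2) ^ (-(2 * α)) * (Real.pi * (n:ℝ)) ^ 2
          = (Real.pi * (n:ℝ)) ^ ((2:ℝ) - 4 * α) := by
        rw [← Real.rpow_natCast (Real.pi * (n:ℝ)) 2, ← Real.rpow_mul hpn.le,
          ← Real.rpow_add hpn]
        congr 1
        push_cast
        ring
      linear_combination (c₀ ^ (-(2 * α)) * c₁ ^ 2 * Q ^ 2 / 2) * h2
    calc (c₀ * Real.pi ^ 2 * (n : ℝ) ^ 2) ^ (-(2 * α)) *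
        (∫ x in (0 : ℝ)..1,
          Real.sqrt 2 * Real.sin ((n : ℝ) * Real.pi * x) * (c₁ * v x * g x)) ^ 2
        = (c₀ * Real.pi ^ 2 * (n : ℝ) ^ 2) ^ (-(2 * α)) * ((Real.sqrt 2 * c₁) * S) ^ 2 := by
          rw [hIeq]
      _ ≤ (c₀ * Real.pi ^ 2 * (n : ℝ) ^ 2) ^ (-(2 * α)) *
          (c₁ ^ 2 * (Real.pi * (n:ℝ)) ^ 2 * Q ^ 2 / 2) := mul_le_mul_of_nonneg_left hIsq hpos
      _ = _ := hkeyeq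
  -- summability of the main series
  have hB : Summable (fun n : ℕ+ =>
      c₁ ^ 2 * c₀ ^ (-(2 * α)) * (1 / 2 * (Real.pi * (n : ℝ)) ^ ((2 : ℝ) - 4 * α)) * Q ^ 2) := by
    refine ((hA.mul_left (c₁ ^ 2 * c₀ ^ (-(2 * α)) * Q ^ 2 / 2)).congr fun n => ?_)
    ring
  have hT : Summable (fun n : ℕ+ => (c₀ * Real.pi ^ 2 * (n : ℝ) ^ 2) ^ (-(2 * α)) *
      (∫ x in (0 : ℝ)..1,
        Real.sqrt 2 * Real.sin ((n : ℝ) * Real.pi * x) * (c₁ * v x * g x)) ^ 2) := by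
    refine Summable.of_nonneg_of_le (fun n => ?_) (fun n => hterm n) hB
    exact mul_nonneg (Real.rpow_nonneg (by positivity) _) (sq_nonneg _)
  refine ⟨hA, hT, ?_⟩
  calc (∑' n : ℕ+, (c₀ * Real.pi ^ 2 * (n : ℝ) ^ 2) ^ (-(2 * α)) *
        (∫ x in (0 : ℝ)..1,
          Real.sqrt 2 * Real.sin ((n : ℝ) * Real.pi * x) * (c₁ * v x * g x)) ^ 2)
      ≤ ∑' n : ℕ+, c₁ ^ 2 * c₀ ^ (-(2 * α)) *
          (1 / 2 * (Real.pi * (n : ℝ)) ^ ((2 : ℝ) - 4 * α)) * Q ^ 2 :=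
        Summable.tsum_le_tsum hterm hT hB
    _ = c₁ ^ 2 * c₀ ^ (-(2 * α)) *
          (1 / 2 * ∑' n : ℕ+, (Real.pi * (n : ℝ)) ^ ((2 : ℝ) - 4 * α)) *
          (∫ x in (0 : ℝ)..1, v x ^ 2) ^ 2 := by
        rw [hQeq]
        have h1 : ∀ n : ℕ+, c₁ ^ 2 * c₀ ^ (-(2 * α)) *
            (1 / 2 * (Real.pi * (n : ℝ)) ^ ((2 : ℝ) - 4 * α)) * Q ^ 2
            = (c₁ ^ 2 * c₀ ^ (-(2 * α)) * Q ^ 2 / 2) * (Real.pi * (n : ℝ)) ^ ((2 : ℝ) - 4 * α) :=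
          fun n => by ring
        rw [tsum_congr h1, tsum_mul_left]
        ring
end

section
/- Let (V,‖·‖_V) be an ℝ-Banach space, let (Ω,𝓕,ℙ) be a probability space, let α ∈ (0,∞), and let Z_n : Ω → V, n ∈ ℕ = {1,2,3,…}, be strongly measurable functions such that for every p ∈ [1,∞): sup_{n∈ℕ} (n^α · (E[‖Z_n‖_V^p])^{1/p}) < ∞. Then for every ε ∈ (0,∞) and every p ∈ [1,∞): ℙ(sup_{n∈ℕ} (n^{α−ε}·‖Z_n‖_V) < ∞) = 1 and E[(sup_{n∈ℕ} (n^{α−ε}·‖Z_n‖_V))^p] < ∞. -/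
open MeasureTheory
open scoped ENNReal NNReal

/-- If `Z_n : Ω → V` are strongly measurable into a real Banach space and for
every `p ∈ [1,∞)` one has `sup_n n^α ‖Z_n‖_{L^p} < ∞`, then for every `ε > 0` and `p ∈ [1,∞)`
the random variable `sup_n n^{α−ε} ‖Z_n‖` is almost surely finite and has finite `p`-th moment. -/
theorem stmt19 {V : Type*} [NormedAddCommGroup V] [NormedSpace ℝ V] [CompleteSpace V]
    {Ω : Type*} [MeasurableSpace Ω] (ℙ : Measure Ω) [IsProbabilityMeasure ℙ]
    (α : ℝ) (hα : 0 < α) (Z : ℕ+ → Ω → V)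
    (hZmeas : ∀ n : ℕ+, StronglyMeasurable (Z n))
    (hZ : ∀ p : ℝ, 1 ≤ p →
      (⨆ n : ℕ+, ((n : ℝ≥0∞) ^ (α : ℝ)) * eLpNorm (Z n) (ENNReal.ofReal p) ℙ) < ⊤) :
    ∀ ε : ℝ, 0 < ε → ∀ p : ℝ, 1 ≤ p →
      ℙ {ω | (⨆ n : ℕ+, ENNReal.ofReal ((n : ℝ) ^ (α - ε) * ‖Z n ω‖)) < ⊤} = 1 ∧
      (∫⁻ ω, (⨆ n : ℕ+, ENNReal.ofReal ((n : ℝ) ^ (α - ε) * ‖Z n ω‖)) ^ p ∂ℙ) < ⊤ := by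
  intro ε hε p hp
  have hp0 : 0 < p := lt_of_lt_of_le one_pos hp
  set q : ℝ := max p (ε⁻¹ + 1) with hqdef
  have hq1 : 1 ≤ q := le_trans hp (le_max_left _ _)
  have hq0 : 0 < q := lt_of_lt_of_le one_pos hq1
  have hpq : p ≤ q := le_max_left _ _
  have hεq : 1 < ε * q := by
    have h1 : ε⁻¹ + 1 ≤ q := le_max_right _ _
    have h2 : ε * (ε⁻¹ + 1) ≤ ε * q := mul_le_mul_of_nonneg_left h1 hε.le
    have h3 : ε * (ε⁻¹ + 1) = 1 + ε := by field_simp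
    linarith
  -- abbreviations
  set a : ℕ+ → Ω → ℝ≥0∞ := fun n ω => ENNReal.ofReal ((n : ℝ) ^ (α - ε) * ‖Z n ω‖) with ha
  set S : Ω → ℝ≥0∞ := fun ω => ⨆ n, a n ω with hS
  have hameas : ∀ n, Measurable (a n) := fun n =>
    (measurable_const.mul (hZmeas n).norm.measurable).ennreal_ofReal
  have hSmeas : Measurable S := Measurable.iSup fun n => hameas n
  -- positivity facts about n
  have hnpos : ∀ n : ℕ+, (0:ℝ) < (n : ℝ) := fun n => by exact_mod_cast n.pos
  have hnne : ∀ n : ℕ+, ((n:ℕ) : ℝ≥0∞) ≠ 0 := fun n =>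
    Nat.cast_ne_zero.mpr n.pos.ne'
  have hnnetop : ∀ n : ℕ+, ((n:ℕ) : ℝ≥0∞) ≠ ⊤ := fun n => ENNReal.natCast_ne_top _
  -- rewrite a n ω
  have ha' : ∀ n ω, a n ω = ((n:ℕ) : ℝ≥0∞) ^ (α - ε) * (‖Z n ω‖₊ : ℝ≥0∞) := by
    intro n ω
    show ENNReal.ofReal ((n : ℝ) ^ (α - ε) * ‖Z n ω‖) = _
    rw [ENNReal.ofReal_mul (by positivity), ofReal_norm, enorm_eq_nnnorm,
      ← ENNReal.ofReal_rpow_of_pos (hnpos n)]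
    norm_num
  -- the L^q setup
  set q' : ℝ≥0∞ := ENNReal.ofReal q with hq'
  have hq'0 : q' ≠ 0 := by
    simp [hq', ENNReal.ofReal_eq_zero]; linarith
  have hq'top : q' ≠ ⊤ := ENNReal.ofReal_ne_top
  have hq'toReal : q'.toReal = q := ENNReal.toReal_ofReal hq0.le
  have hInt : ∀ n : ℕ+, ∫⁻ ω, (‖Z n ω‖₊ : ℝ≥0∞) ^ q ∂ℙ = (eLpNorm (Z n) q' ℙ) ^ q := by
    intro n
    simp_rw [← enorm_eq_nnnorm]
    rw [eLpNorm_eq_lintegral_rpow_enorm_toReal hq'0 hq'top, hq'toReal, one_div,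
      ENNReal.rpow_inv_rpow hq0.ne']
  set C : ℝ≥0∞ := ⨆ n : ℕ+, ((n : ℝ≥0∞) ^ (α : ℝ)) * eLpNorm (Z n) q' ℙ with hC
  have hCfin : C < ⊤ := hZ q hq1
  -- per-term bound
  have hterm : ∀ n : ℕ+, ∫⁻ ω, (a n ω) ^ q ∂ℙ ≤ ((n:ℕ) : ℝ≥0∞) ^ (-(ε * q)) * C ^ q := by
    intro n
    have hmeasnn : Measurable fun ω => ((‖Z n ω‖₊ : ℝ≥0∞)) ^ q :=
      Measurable.pow (hZmeas n).enorm measurable_const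
    have h1 : ∫⁻ ω, (a n ω) ^ q ∂ℙ
        = (((n:ℕ) : ℝ≥0∞) ^ (α - ε)) ^ q * ∫⁻ ω, (‖Z n ω‖₊ : ℝ≥0∞) ^ q ∂ℙ := by
      rw [← lintegral_const_mul _ hmeasnn]
      refine lintegral_congr fun ω => ?_
      rw [ha' n ω, ENNReal.mul_rpow_of_nonneg _ _ hq0.le]
    rw [h1, hInt n, ← ENNReal.mul_rpow_of_nonneg _ _ hq0.le]
    have h2 : ((n:ℕ) : ℝ≥0∞) ^ (α - ε) * eLpNorm (Z n) q' ℙ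
        ≤ ((n:ℕ) : ℝ≥0∞) ^ (-ε) * C := by
      have : ((n:ℕ) : ℝ≥0∞) ^ (α - ε)
          = ((n:ℕ) : ℝ≥0∞) ^ (-ε) * ((n:ℕ) : ℝ≥0∞) ^ (α : ℝ) := by
        rw [← ENNReal.rpow_add _ _ (hnne n) (hnnetop n)]
        ring_nf
      rw [this, mul_assoc]
      refine mul_le_mul_right ?_ _
      have := le_iSup (fun n : ℕ+ => ((n : ℝ≥0∞) ^ (α : ℝ)) * eLpNorm (Z n) q' ℙ) n
      exact_mod_cast this
    calc (((n:ℕ) : ℝ≥0∞) ^ (α - ε) * eLpNorm (Z n) q' ℙ) ^ q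
        ≤ (((n:ℕ) : ℝ≥0∞) ^ (-ε) * C) ^ q := ENNReal.rpow_le_rpow h2 hq0.le
      _ = ((n:ℕ) : ℝ≥0∞) ^ (-(ε * q)) * C ^ q := by
          rw [ENNReal.mul_rpow_of_nonneg _ _ hq0.le, ← ENNReal.rpow_mul]
          ring_nf
  -- summability
  have hsum : (∑' n : ℕ+, ((n:ℕ) : ℝ≥0∞) ^ (-(ε * q))) < ⊤ := by
    have hreal : Summable fun n : ℕ+ => ((n:ℕ) : ℝ) ^ (-(ε * q)) := by
      have h : Summable fun n : ℕ => (n : ℝ) ^ (-(ε * q)) :=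
        Real.summable_nat_rpow.mpr (by linarith)
      exact h.comp_injective PNat.coe_injective
    have heq : ∀ n : ℕ+, ((n:ℕ) : ℝ≥0∞) ^ (-(ε * q))
        = ENNReal.ofReal (((n:ℕ) : ℝ) ^ (-(ε * q))) := by
      intro n
      rw [← ENNReal.ofReal_rpow_of_pos (hnpos n)]
      norm_num
    calc (∑' n : ℕ+, ((n:ℕ) : ℝ≥0∞) ^ (-(ε * q)))
        = ∑' n : ℕ+, ENNReal.ofReal (((n:ℕ) : ℝ) ^ (-(ε * q))) := tsum_congr heq
      _ = ENNReal.ofReal (∑' n : ℕ+, ((n:ℕ) : ℝ) ^ (-(ε * q))) :=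
          (ENNReal.ofReal_tsum_of_nonneg (fun n => by positivity) hreal).symm
      _ < ⊤ := ENNReal.ofReal_lt_top
  -- pointwise bound for S^q
  have hptw : ∀ ω, S ω ^ q ≤ ∑' n, (a n ω) ^ q := by
    intro ω
    have h1 : S ω ≤ (∑' n, a n ω ^ q) ^ q⁻¹ := by
      refine iSup_le fun n => ?_
      have hle := ENNReal.le_tsum (f := fun n => a n ω ^ q) n
      calc a n ω = (a n ω ^ q) ^ q⁻¹ := (ENNReal.rpow_rpow_inv hq0.ne' _).symm
        _ ≤ (∑' n, a n ω ^ q) ^ q⁻¹ := ENNReal.rpow_le_rpow hle (by positivity)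
    calc S ω ^ q ≤ ((∑' n, a n ω ^ q) ^ q⁻¹) ^ q := ENNReal.rpow_le_rpow h1 hq0.le
      _ = ∑' n, a n ω ^ q := ENNReal.rpow_inv_rpow hq0.ne' _
  -- finiteness of ∫ S^q
  have hSq : ∫⁻ ω, S ω ^ q ∂ℙ < ⊤ := by
    calc ∫⁻ ω, S ω ^ q ∂ℙ ≤ ∫⁻ ω, ∑' n, (a n ω) ^ q ∂ℙ := lintegral_mono hptw
      _ = ∑' n, ∫⁻ ω, (a n ω) ^ q ∂ℙ :=
          lintegral_tsum fun n => (Measurable.pow (hameas n) measurable_const).aemeasurable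
      _ ≤ ∑' n : ℕ+, ((n:ℕ) : ℝ≥0∞) ^ (-(ε * q)) * C ^ q := ENNReal.tsum_le_tsum hterm
      _ = (∑' n : ℕ+, ((n:ℕ) : ℝ≥0∞) ^ (-(ε * q))) * C ^ q := ENNReal.tsum_mul_right
      _ < ⊤ := ENNReal.mul_lt_top hsum (ENNReal.rpow_lt_top_of_nonneg hq0.le hCfin.ne)
  -- p-th moment
  have hSp : ∫⁻ ω, S ω ^ p ∂ℙ < ⊤ := by
    have hmono : ∀ ω, S ω ^ p ≤ 1 + S ω ^ q := by
      intro ω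
      rcases le_or_gt (S ω) 1 with h | h
      · exact le_trans (ENNReal.rpow_le_one h hp0.le) le_self_add
      · exact le_trans (ENNReal.rpow_le_rpow_of_exponent_le h.le hpq) le_add_self
    calc ∫⁻ ω, S ω ^ p ∂ℙ ≤ ∫⁻ ω, (1 + S ω ^ q) ∂ℙ := lintegral_mono hmono
      _ = 1 + ∫⁻ ω, S ω ^ q ∂ℙ := by
          rw [lintegral_add_left measurable_const, lintegral_one, measure_univ]
      _ < ⊤ := by
          exact ENNReal.add_lt_top.mpr ⟨ENNReal.one_lt_top, hSq⟩
  -- a.s. finiteness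
  have haefin : ∀ᵐ ω ∂ℙ, S ω < ⊤ := by
    have h1 : ∀ᵐ ω ∂ℙ, S ω ^ q < ⊤ :=
      ae_lt_top (Measurable.pow hSmeas measurable_const) hSq.ne
    filter_upwards [h1] with ω hω
    exact (ENNReal.rpow_lt_top_iff_of_pos hq0).mp hω
  refine ⟨?_, hSp⟩
  have hms : MeasurableSet {ω | S ω < ⊤} := hSmeas measurableSet_Iio
  rw [← prob_compl_eq_zero_iff hms]
  have : {ω | S ω < ⊤}ᶜ = {ω | ¬ S ω < ⊤} := rfl
  rw [this, ← ae_iff]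
  exact haefin
end
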